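/- arXiv:0807.3278 — 5 statements merged into one kernel-verified Lean document; each statement's English description precedes it below -/
import Mathlib

section
/- Let X be a compact metric space and let e^t and u^t be commuting flows on X. Assume each e^t is an isometry of X, and that for every x ∈ X there exists y ∈ X such that u^t x → y as t → +∞ and as t → −∞. Then the composed flow (eu)^t = e^t ∘ u^t is chain recurrent, i.e., every point of X is chain recurrent for it. -/
open Filter Topology

/-- An `(ε, t₀)`-chain from `x` to `y` for the flow `φ`: a finite sequence of points
starting at `x` and ending at `y`, together with times `≥ t₀`, each jump of size `< ε`. -/
def IsEpsTChain {X : Type*} [MetricSpace X] {𝕋 : Type*}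
    (φ : 𝕋 → X → X) (ε : ℝ) (t₀ : 𝕋) [LE 𝕋] (x y : X) : Prop :=
  ∃ n : ℕ, ∃ xs : Fin (n + 2) → X, ∃ ts : Fin (n + 1) → 𝕋,
    xs 0 = x ∧ xs (Fin.last (n + 1)) = y ∧
    ∀ i : Fin (n + 1), t₀ ≤ ts i ∧ dist (φ (ts i) (xs i.castSucc)) (xs i.succ) < ε

/-- If `e` and `u` are commuting flows on a compact metric space, every
`e^t` is an isometry, and for every `x` the forward and backward `u`-orbits of `x` converge
to a common point, then the composed flow `(eu)^t = e^t ∘ u^t` is chain recurrent: every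
point admits an `(ε, t₀)`-chain from itself to itself, for all `ε > 0`, `t₀ > 0`. -/
theorem composed_flow_chain_recurrent {X : Type*} [MetricSpace X] [CompactSpace X]
    {𝕋 : Type*} [AddCommGroup 𝕋] [LinearOrder 𝕋] [IsOrderedAddMonoid 𝕋]
    (e u : 𝕋 → X → X)
    (he0 : e 0 = id) (headd : ∀ s t : 𝕋, e (s + t) = e s ∘ e t)
    (hu0 : u 0 = id) (huadd : ∀ s t : 𝕋, u (s + t) = u s ∘ u t)
    (hcomm : ∀ s t : 𝕋, e s ∘ u t = u t ∘ e s)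
    (hiso : ∀ t : 𝕋, Isometry (e t))
    (hlim : ∀ x : X, ∃ y : X,
      Tendsto (fun t : 𝕋 => u t x) atTop (𝓝 y) ∧
      Tendsto (fun t : 𝕋 => u t x) atBot (𝓝 y)) :
    ∀ (x : X) (ε : ℝ) (t₀ : 𝕋), 0 < ε → 0 < t₀ →
      IsEpsTChain (fun t => e t ∘ u t) ε t₀ x x := by
  intro x ε t₀ hε ht₀
  obtain ⟨y, hyP, hyN⟩ := hlim x
  have eadd : ∀ s t (z : X), e (s + t) z = e s (e t z) := fun s t z => congrFun (headd s t) z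
  have uinv : ∀ (t : 𝕋) (z : X), u t (u (-t) z) = z := by
    intro t z
    have h := congrFun (huadd t (-t)) z
    simpa [hu0] using h.symm
  have ecomm : ∀ s t (z : X), u t (e s z) = e s (u t z) := by
    intro s t z
    have h := congrFun (hcomm s t) z
    simpa using h.symm
  -- choose T ≥ t₀ with both u^T x and u^{-T} x close to y
  have hP : ∀ᶠ t in atTop, dist (u t x) y < ε / 2 :=
    hyP (Metric.ball_mem_nhds y (by linarith))
  have hN2 : ∀ᶠ t in atBot, dist (u t x) y < ε / 2 :=
    hyN (Metric.ball_mem_nhds y (by linarith))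
  obtain ⟨T₁, hT₁⟩ := hP.exists_forall_of_atTop
  obtain ⟨T₂, hT₂⟩ := hN2.exists_forall_of_atBot
  set T : 𝕋 := max t₀ (max T₁ (-T₂)) with hTdef
  have hTt₀ : t₀ ≤ T := le_max_left _ _
  have hdP : dist (u T x) y < ε / 2 := hT₁ T (le_trans (le_max_left _ _) (le_max_right _ _))
  have hdN : dist (u (-T) x) y < ε / 2 := by
    apply hT₂
    have h : -T₂ ≤ T := le_trans (le_max_right _ _) (le_max_right _ _)
    simpa using neg_le_neg h
  have hjump : dist (u T x) (u (-T) x) < ε := by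
    calc dist (u T x) (u (-T) x) ≤ dist (u T x) y + dist (u (-T) x) y :=
          dist_triangle_right _ _ _
      _ < ε := by linarith
  -- recurrence: find k ≥ 1 with dist (e ((2*k) • T) x) x < ε
  obtain ⟨p, -, φ', hφ', hconv⟩ :=
    isCompact_univ.tendsto_subseq (fun n : ℕ => Set.mem_univ (e ((2 * n) • T) x))
  obtain ⟨N, hN⟩ := (Metric.tendsto_atTop.mp hconv) (ε / 2) (by linarith)
  have hjm : φ' N < φ' (N + 1) := hφ' (Nat.lt_succ_self N)
  set j := φ' N with hj
  set m := φ' (N + 1) with hm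
  have hdjm : dist (e ((2 * j) • T) x) (e ((2 * m) • T) x) < ε := by
    have h1 := hN N le_rfl
    have h2 := hN (N + 1) (Nat.le_succ N)
    simp only [Function.comp] at h1 h2
    calc dist (e ((2 * j) • T) x) (e ((2 * m) • T) x)
        ≤ dist (e ((2 * j) • T) x) p + dist (e ((2 * m) • T) x) p :=
          dist_triangle_right _ _ _
      _ < ε := by rw [hj, hm]; linarith
  have hsplit : e ((2 * m) • T) x = e ((2 * j) • T) (e ((2 * (m - j)) • T) x) := by
    rw [← eadd, ← add_nsmul]
    congr 2
    omega
  have hrec : dist (e ((2 * (m - j)) • T) x) x < ε := by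
    have := (hiso ((2 * j) • T)).dist_eq (e ((2 * (m - j)) • T) x) x
    rw [← this, ← hsplit]
    exact (dist_comm (e ((2 * j) • T) x) (e ((2 * m) • T) x) ▸ hdjm)
  obtain ⟨k', hk'⟩ : ∃ k', m - j = k' + 1 := ⟨m - j - 1, by omega⟩
  rw [hk'] at hrec
  set k := k' + 1 with hk
  -- build the chain of length 2k
  refine ⟨2 * k' + 1, ?_, fun _ => T, ?_, ?_, ?_⟩
  · exact fun i => if (i : ℕ) = 2 * k' + 2 then x
      else if (i : ℕ) % 2 = 0 then e ((i : ℕ) • T) x else e ((i : ℕ) • T) (u (-T) x)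
  · simp [he0]
  · simp [Fin.last]
  · intro i
    refine ⟨hTt₀, ?_⟩
    have hilt : (i : ℕ) < 2 * k' + 2 := i.isLt
    simp only [Fin.coe_castSucc, Fin.val_succ]
    rw [if_neg (show ¬((i : ℕ) = 2 * k' + 2) by omega)]
    rcases Nat.even_or_odd (i : ℕ) with he | ho
    · -- even step: flow to e^{(i+1)T} u^T x, jump to e^{(i+1)T} u^{-T} x
      have hmod : (i : ℕ) % 2 = 0 := Nat.even_iff.mp he
      have hne : (i : ℕ) + 1 ≠ 2 * k' + 2 := by omega
      have hmod1 : ((i : ℕ) + 1) % 2 ≠ 0 := by omega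
      rw [if_pos hmod, if_neg hne, if_neg hmod1]
      have hflow : e T (u T (e ((i : ℕ) • T) x)) = e (((i : ℕ) + 1) • T) (u T x) := by
        rw [ecomm, ← eadd, succ_nsmul, add_comm]
      simp only [Function.comp]
      rw [hflow]
      rw [(hiso (((i : ℕ) + 1) • T)).dist_eq]
      exact hjump
    · -- odd step: flow lands exactly on e^{(i+1)T} x
      have hmod : (i : ℕ) % 2 ≠ 0 := by
        rw [Nat.odd_iff] at ho; omega
      rw [if_neg hmod]
      have hflow : e T (u T (e ((i : ℕ) • T) (u (-T) x))) = e (((i : ℕ) + 1) • T) x := by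
        rw [ecomm, ← eadd, uinv, succ_nsmul, add_comm]
      simp only [Function.comp]
      rw [hflow]
      by_cases hlast : (i : ℕ) + 1 = 2 * k' + 2
      · rw [if_pos hlast, hlast]
        have : 2 * k' + 2 = 2 * k := by omega
        rw [this]
        exact hrec
      · rw [if_neg hlast, if_pos (by omega)]
        simpa using hε
end

section
/- Let V be a finite-dimensional normed real vector space, V = U ⊕ W a direct sum, and x_n = u_n + w_n a sequence with u_n ∈ U, u_n ≠ 0, w_n ∈ W, and w_n/‖u_n‖ → 0. If the lines [x_n] converge in the projective space ℙ(V) to a line [x], then [x] lies in ℙ(U), i.e., x ∈ U. -/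
open Filter Topology LinearAlgebra.Projectivization

instance projectivizationTopology {K V : Type*} [DivisionRing K] [AddCommGroup V]
    [Module K V] [TopologicalSpace V] : TopologicalSpace (ℙ K V) :=
  instTopologicalSpaceQuotient

/-- Let `V = U ⊕ W` be a direct sum decomposition of a finite-dimensional
normed real vector space and `x_n = u_n + w_n` with `u_n ∈ U` nonzero, `w_n ∈ W`, and
`w_n / ‖u_n‖ → 0`.  If the lines `[x_n]` converge in `ℙ(V)` to a line `[x]`, then
`x ∈ U`. -/
theorem lim_line_mem_of_dominant {V : Type*} [NormedAddCommGroup V] [NormedSpace ℝ V]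
    [FiniteDimensional ℝ V] (U W : Submodule ℝ V) (hUW : IsCompl U W)
    (u w : ℕ → V) (hu : ∀ n, u n ∈ U) (hw : ∀ n, w n ∈ W) (hu0 : ∀ n, u n ≠ 0)
    (hquot : Tendsto (fun n => (‖u n‖)⁻¹ • w n) atTop (𝓝 0))
    (hx : ∀ n, u n + w n ≠ 0) (x : V) (hx0 : x ≠ 0)
    (hconv : Tendsto (fun n => Projectivization.mk ℝ (u n + w n) (hx n)) atTop
      (𝓝 (Projectivization.mk ℝ x hx0))) :
    x ∈ U := by
  -- the linear projection onto `W` with kernel `U`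
  set π : V →ₗ[ℝ] W := W.linearProjOfIsCompl U hUW.symm with hπ
  have hπcont : Continuous π := π.continuous_of_finiteDimensional
  -- the scale-invariant function on nonzero vectors
  set g : {v : V // v ≠ 0} → ℝ := fun v => ‖π v.1‖ / ‖v.1‖ with hg
  have hginv : ∀ (a b : {v : V // v ≠ 0}) (t : ℝ), (a : V) = t • (b : V) → g a = g b := by
    rintro ⟨a, ha⟩ ⟨b, hb⟩ t h
    have h' : a = t • b := h
    have ht : t ≠ 0 := by rintro rfl; simp at h'; exact ha h'
    simp only [hg, h', map_smul, norm_smul]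
    rw [mul_div_mul_left _ _ (by simpa using ht)]
  set f : ℙ ℝ V → ℝ := Projectivization.lift g hginv with hf
  have hfc : Continuous f := by
    have hcg : Continuous g := (hπcont.comp continuous_subtype_val).norm.div
      (continuous_subtype_val.norm) (fun v => norm_ne_zero_iff.mpr v.2)
    exact hcg.quotient_lift _
  -- the values along the sequence
  have hπx : ∀ n, π (u n + w n) = ⟨w n, hw n⟩ := by
    intro n
    rw [map_add]
    have h1 : π (u n) = 0 := by
      exact Submodule.projectionOnto_apply_right hUW.symm ⟨u n, hu n⟩
    have h2 : π (w n) = ⟨w n, hw n⟩ :=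
      Submodule.linearProjOfIsCompl_apply_left hUW.symm ⟨w n, hw n⟩
    rw [h1, h2, zero_add]
  -- f along the sequence tends to 0
  have hz : Tendsto (fun n => ‖(‖u n‖)⁻¹ • w n‖) atTop (𝓝 0) := by
    simpa using hquot.norm
  have hz' : ∀ n, ‖(‖u n‖)⁻¹ • w n‖ = ‖w n‖ / ‖u n‖ := by
    intro n
    rw [norm_smul, norm_inv, norm_norm, div_eq_inv_mul]
  have hseq : Tendsto (fun n => f (Projectivization.mk ℝ (u n + w n) (hx n))) atTop (𝓝 0) := by
    have hval : ∀ n, f (Projectivization.mk ℝ (u n + w n) (hx n)) = ‖w n‖ / ‖u n + w n‖ := by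
      intro n
      rw [hf, Projectivization.lift_mk, hg]
      simp [hπx n]
    simp only [hval]
    apply squeeze_zero' (g := fun n => 2 * (‖w n‖ / ‖u n‖))
    · exact Eventually.of_forall fun n => div_nonneg (norm_nonneg _) (norm_nonneg _)
    · have hsmall : ∀ᶠ n in atTop, ‖w n‖ / ‖u n‖ < 1/2 := by
        have := hz.eventually (eventually_lt_nhds (show (0:ℝ) < 1/2 by norm_num))
        filter_upwards [this] with n hn
        rw [← hz' n]; exact hn
      filter_upwards [hsmall] with n hn
      have hupos : (0:ℝ) < ‖u n‖ := norm_pos_iff.mpr (hu0 n)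
      have hwn : ‖w n‖ < ‖u n‖ / 2 := by
        rw [div_lt_iff₀ hupos] at hn
        linarith
      have hlow : ‖u n‖ / 2 ≤ ‖u n + w n‖ := by
        have h1 : ‖u n‖ ≤ ‖u n + w n‖ + ‖w n‖ := by
          calc ‖u n‖ = ‖(u n + w n) + (-(w n))‖ := by rw [add_neg_cancel_right]
            _ ≤ ‖u n + w n‖ + ‖-(w n)‖ := norm_add_le _ _
            _ = ‖u n + w n‖ + ‖w n‖ := by rw [norm_neg]
        linarith
      have hxpos : (0:ℝ) < ‖u n + w n‖ := by linarith
      rw [div_le_iff₀ hxpos]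
      have : 2 * (‖w n‖ / ‖u n‖) * ‖u n + w n‖ ≥ 2 * (‖w n‖ / ‖u n‖) * (‖u n‖ / 2) := by
        apply mul_le_mul_of_nonneg_left hlow
        positivity
      calc ‖w n‖ = 2 * (‖w n‖ / ‖u n‖) * (‖u n‖ / 2) := by field_simp
        _ ≤ 2 * (‖w n‖ / ‖u n‖) * ‖u n + w n‖ := this
    · have : Tendsto (fun n => ‖w n‖ / ‖u n‖) atTop (𝓝 0) := by
        simpa only [hz'] using hz
      simpa using this.const_mul 2
  -- by continuity, f of the limit is 0
  have hlim : Tendsto (fun n => f (Projectivization.mk ℝ (u n + w n) (hx n))) atTop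
      (𝓝 (f (Projectivization.mk ℝ x hx0))) := (hfc.tendsto _).comp hconv
  have h0 : f (Projectivization.mk ℝ x hx0) = 0 := tendsto_nhds_unique hlim hseq
  rw [hf, Projectivization.lift_mk, hg] at h0
  have hπ0 : π x = 0 := by
    have hxn : ‖x‖ ≠ 0 := norm_ne_zero_iff.mpr hx0
    field_simp at h0
    simpa using h0
  exact (Submodule.linearProjOfIsCompl_apply_eq_zero_iff hUW.symm).mp hπ0
end

section
/- Let V be a finite-dimensional normed real vector space and let g ∈ GL(V) have trivial hyperbolic Jordan component (equivalently, all complex eigenvalues of g have modulus 1). Then for every x ≠ 0 there exists ε > 0 such that ‖g^t x‖ > ε for all t ∈ ℤ. -/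
noncomputable def zbinom (t : ℤ) (j : ℕ) : ℝ :=
  (∏ i ∈ Finset.range j, ((t : ℝ) - (i : ℝ))) / (Nat.factorial j)

@[simp] lemma zbinom_zero (t : ℤ) : zbinom t 0 = 1 := by simp [zbinom]

lemma zbinom_zero_left {j : ℕ} (hj : j ≠ 0) : zbinom 0 j = 0 := by
  have h0 : (0:ℕ) ∈ Finset.range j := Finset.mem_range.2 (Nat.pos_of_ne_zero hj)
  simp [zbinom, Finset.prod_eq_zero h0]

lemma zbinom_pascal (t : ℤ) (j : ℕ) :
    zbinom (t + 1) (j + 1) = zbinom t (j + 1) + zbinom t j := by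
  have h1 : ∏ i ∈ Finset.range (j+1), (((t+1 : ℤ) : ℝ) - (i : ℝ))
      = ((t:ℝ)+1) * ∏ i ∈ Finset.range j, ((t : ℝ) - (i : ℝ)) := by
    rw [Finset.prod_range_succ']
    have h : ∀ i ∈ Finset.range j, (((t+1:ℤ)):ℝ) - (((i+1 : ℕ)):ℝ) = (t:ℝ) - (i:ℝ) := by
      intro i _; push_cast; ring
    rw [Finset.prod_congr rfl h]
    push_cast
    ring
  have h2 : ∏ i ∈ Finset.range (j+1), ((t : ℝ) - (i : ℝ))
      = (∏ i ∈ Finset.range j, ((t : ℝ) - (i : ℝ))) * ((t:ℝ) - j) := by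
    rw [Finset.prod_range_succ]
  have hfac : ((Nat.factorial (j+1) : ℝ)) = (j+1) * Nat.factorial j := by
    rw [Nat.factorial_succ]; push_cast; ring
  have hj : (Nat.factorial j : ℝ) ≠ 0 := by positivity
  have hj1 : ((j:ℝ)+1) ≠ 0 := by positivity
  unfold zbinom
  rw [h1, h2, hfac]
  field_simp
  ring

lemma prod_add_one_eq_factorial (k : ℕ) :
    ∏ i ∈ Finset.range k, ((i : ℝ) + 1) = Nat.factorial k := by
  induction k with
  | zero => simp
  | succ n ih => rw [Finset.prod_range_succ, ih, Nat.factorial_succ]; push_cast; ring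

lemma prod_sub_eq_factorial (k : ℕ) :
    ∏ i ∈ Finset.range k, ((k : ℝ) - (i : ℝ)) = Nat.factorial k := by
  rw [← prod_add_one_eq_factorial k]
  rw [← Finset.prod_range_reflect (fun i => (i:ℝ) + 1) k]
  apply Finset.prod_congr rfl
  intro i hi
  have hik : i < k := Finset.mem_range.1 hi
  have : ((k - 1 - i : ℕ) : ℝ) = (k:ℝ) - 1 - i := by
    have h1 : i ≤ k - 1 := Nat.le_sub_one_of_lt hik
    have h2 : 1 ≤ k := Nat.one_le_iff_ne_zero.2 (by omega)
    push_cast [Nat.cast_sub h1, Nat.cast_sub h2]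
    ring
  rw [this]
  ring

lemma one_le_abs_zbinom {t : ℤ} {k : ℕ} (h : t < 0 ∨ (k : ℤ) ≤ t) :
    1 ≤ |zbinom t k| := by
  have hfac : (0:ℝ) < Nat.factorial k := by positivity
  have key : (Nat.factorial k : ℝ) ≤ |∏ i ∈ Finset.range k, ((t : ℝ) - (i : ℝ))| := by
    rw [Finset.abs_prod]
    rcases h with h | h
    · rw [← prod_add_one_eq_factorial k]
      apply Finset.prod_le_prod
      · intro i _; positivity
      · intro i _
        have : (t:ℝ) ≤ -1 := by exact_mod_cast Int.le_sub_one_of_lt h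
        rw [abs_sub_comm, abs_of_nonneg (by linarith [Nat.cast_nonneg (α := ℝ) i])]
        linarith
    · rw [← prod_sub_eq_factorial k]
      apply Finset.prod_le_prod
      · intro i hi
        have : (i:ℝ) < (k:ℝ) := by exact_mod_cast Finset.mem_range.1 hi
        linarith
      · intro i hi
        have hik : (i:ℝ) < (k:ℝ) := by exact_mod_cast Finset.mem_range.1 hi
        have hkt : (k:ℝ) ≤ (t:ℝ) := by exact_mod_cast h
        rw [abs_of_nonneg (by linarith)]
        linarith
  rw [zbinom, abs_div, abs_of_pos hfac, le_div_iff₀ hfac, one_mul]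
  exact key

lemma nilpotent_orbit_not_mem_span {E : Type*} [AddCommGroup E] [Module ℂ E]
    (N : Module.End ℂ E) (x : E) (k : ℕ)
    (hk : (N ^ k) x ≠ 0) (hk1 : (N ^ (k + 1)) x = 0) :
    (N ^ k) x ∉ Submodule.span ℂ (Set.range fun j : Fin k => (N ^ (j : ℕ)) x) := by
  intro hmem
  rw [Submodule.mem_span_range_iff_exists_fun] at hmem
  obtain ⟨c, hc⟩ := hmem
  have hzero : ∀ m : ℕ, k + 1 ≤ m → (N ^ m) x = 0 := by
    intro m hm
    have : N ^ m = N ^ (m - (k + 1)) * N ^ (k + 1) := by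
      rw [← pow_add]
      congr 1
      omega
    rw [this, Module.End.mul_apply, hk1, map_zero]
  have hcz : ∀ i : ℕ, ∀ hi : i < k, c ⟨i, hi⟩ = 0 := by
    intro i
    induction i using Nat.strong_induction_on with
    | _ i IH =>
      intro hi
      have happ := congrArg (fun v => (N ^ (k - i)) v) hc
      simp only [map_sum, map_smul] at happ
      have hterm : ∀ j : Fin k, (N ^ (k - i)) ((N ^ (j:ℕ)) x) = (N ^ (k - i + (j:ℕ))) x := by
        intro j
        rw [pow_add, Module.End.mul_apply]
      have hrhs : (N ^ (k - i)) ((N ^ k) x) = 0 := by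
        rw [← Module.End.mul_apply, ← pow_add]
        apply hzero
        omega
      rw [Finset.sum_congr rfl (fun j _ => by rw [hterm j])] at happ
      have hsingle : ∑ j : Fin k, c j • (N ^ (k - i + (j:ℕ))) x
          = c ⟨i, hi⟩ • (N ^ k) x := by
        rw [← Finset.sum_subset (Finset.subset_univ {(⟨i, hi⟩ : Fin k)})]
        · rw [Finset.sum_singleton]
          rw [show k - i + ((⟨i, hi⟩ : Fin k) : ℕ) = k by simp only [Fin.val_mk]; omega]
        · intro j _ hj
          simp only [Finset.mem_singleton] at hj
          rcases lt_trichotomy (j : ℕ) i with h | h | h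
          · rw [IH (j:ℕ) h j.2]
            simp
          · exact absurd (Fin.ext h : j = ⟨i, hi⟩) hj
          · rw [hzero (k - i + (j:ℕ)) (by omega), smul_zero]
      rw [hsingle, hrhs] at happ
      exact (smul_eq_zero.1 happ).resolve_right hk
  have : ∑ j : Fin k, c j • (N ^ (j:ℕ)) x = 0 := by
    apply Finset.sum_eq_zero
    intro j _
    rw [show c j = 0 from by rw [← Fin.eta j j.2]; exact hcz (j:ℕ) j.2, zero_smul]
  rw [this] at hc
  exact hk hc.symm

section ZpowHelpers

variable {R : Type*} [Semiring R] {E : Type*} [AddCommMonoid E] [Module R E]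

lemma zpow_succ_apply' (F : E ≃ₗ[R] E) (t : ℤ) (v : E) :
    (F ^ (t + 1)) v = F ((F ^ t) v) := by
  have hmul : F ^ (t + 1) = F * F ^ t := by
    rw [zpow_add_one]
    exact ((Commute.refl F).zpow_left t).eq
  rw [hmul]
  rfl

lemma zpow_pred_apply' (F : E ≃ₗ[R] E) (t : ℤ) (v : E) :
    (F ^ (t - 1)) v = F.symm ((F ^ t) v) := by
  have h := zpow_succ_apply' F (t - 1) v
  rw [sub_add_cancel] at h
  rw [h, F.symm_apply_apply]

lemma zpow_pred_ind (F : E ≃ₗ[R] E) (P : E → Prop)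
    (hP : ∀ v, P v → P (F v)) (hP' : ∀ v, P v → P (F.symm v)) :
    ∀ (t : ℤ) (v : E), P v → P ((F ^ t) v) := by
  intro t
  induction t using Int.induction_on with
  | zero => intro v hv; simpa using hv
  | succ n ih =>
      intro v hv
      rw [zpow_succ_apply']
      exact hP _ (ih v hv)
  | pred n ih =>
      intro v hv
      have he : (-(n : ℤ) - 1) = (-(n:ℤ)) - 1 := by ring
      rw [he, zpow_pred_apply']
      exact hP' _ (ih v hv)

lemma zpow_conj {V : Type*} [AddCommMonoid V] {S : Type*} [Semiring S] [Module S V]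
    (g : V ≃ₗ[S] V) (F : E ≃ₗ[R] E) (ι : V → E)
    (h : ∀ v, F (ι v) = ι (g v)) :
    ∀ (t : ℤ) (v : V), (F ^ t) (ι v) = ι ((g ^ t) v) := by
  have hsymm : ∀ v, F.symm (ι v) = ι (g.symm v) := by
    intro v
    conv_lhs => rw [show v = g (g.symm v) from (g.apply_symm_apply v).symm, ← h]
    rw [F.symm_apply_apply]
  intro t
  induction t using Int.induction_on with
  | zero => intro v; simp
  | succ n ih =>
      intro v
      rw [zpow_succ_apply', ih, h, zpow_succ_apply']
  | pred n ih =>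
      intro v
      have he : (-(n : ℤ) - 1) = (-(n:ℤ)) - 1 := by ring
      rw [he, zpow_pred_apply', ih, hsymm, zpow_pred_apply']

end ZpowHelpers

lemma key_binom {E : Type*} [AddCommGroup E] [Module ℂ E] (f : E ≃ₗ[ℂ] E) (μ : ℂ)
    (hμ : μ ≠ 0) (x : E) (k : ℕ) (w : ℕ → E)
    (hw0 : w 0 = x)
    (hwsucc : ∀ j, f (w j) = μ • w j + μ • w (j + 1))
    (hwtop : w (k + 1) = 0) :
    ∀ t : ℤ, (f ^ t) x = μ ^ t • ∑ j ∈ Finset.range (k + 1), ((zbinom t j : ℂ)) • w j := by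
  set S : ℤ → E := fun t => ∑ j ∈ Finset.range (k + 1), ((zbinom t j : ℂ)) • w j with hS
  have step : ∀ t : ℤ, f (μ ^ t • S t) = μ ^ (t + 1) • S (t + 1) := by
    intro t
    have expand : ∑ j ∈ Finset.range (k + 1), ((zbinom t j : ℂ)) • f (w j)
        = μ • (S t + ∑ j ∈ Finset.range (k + 1), ((zbinom t j : ℂ)) • w (j + 1)) := by
      calc ∑ j ∈ Finset.range (k + 1), ((zbinom t j : ℂ)) • f (w j)
          = ∑ j ∈ Finset.range (k + 1),
            (μ • (((zbinom t j : ℂ)) • w j) + μ • (((zbinom t j : ℂ)) • w (j+1))) := by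
            apply Finset.sum_congr rfl
            intro j _
            rw [hwsucc j, smul_add, smul_comm, smul_comm ((zbinom t j : ℂ)) μ]
        _ = μ • S t + μ • ∑ j ∈ Finset.range (k + 1), ((zbinom t j : ℂ)) • w (j + 1) := by
            rw [Finset.sum_add_distrib, ← Finset.smul_sum, ← Finset.smul_sum]
        _ = _ := (smul_add _ _ _).symm
    have shift : ∑ j ∈ Finset.range (k + 1), ((zbinom t j : ℂ)) • w (j + 1)
        = ∑ j ∈ Finset.range k, ((zbinom t j : ℂ)) • w (j + 1) := by
      rw [Finset.sum_range_succ, hwtop, smul_zero, add_zero]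
    have lhs : S (t + 1) = S t + ∑ j ∈ Finset.range k, ((zbinom t j : ℂ)) • w (j + 1) := by
      rw [hS]
      simp only
      rw [Finset.sum_range_succ' (fun j => ((zbinom (t+1) j : ℂ)) • w j) k,
        Finset.sum_range_succ' (fun j => ((zbinom t j : ℂ)) • w j) k]
      have hps : ∀ j, ((zbinom (t+1) (j+1) : ℂ)) • w (j+1)
          = ((zbinom t (j+1) : ℂ)) • w (j+1) + ((zbinom t j : ℂ)) • w (j+1) := by
        intro j
        rw [zbinom_pascal t j]
        push_cast
        rw [add_smul]
      simp only [hps, zbinom_zero, Finset.sum_add_distrib]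
      push_cast
      abel
    have sumid : S (t + 1) = μ⁻¹ • ∑ j ∈ Finset.range (k + 1), ((zbinom t j : ℂ)) • f (w j) := by
      rw [expand, shift, ← lhs, inv_smul_smul₀ hμ]
    rw [map_smul, sumid, smul_smul]
    have hpow : μ ^ (t + 1) * μ⁻¹ = μ ^ t := by
      rw [zpow_add_one₀ hμ]
      field_simp
    rw [hpow]
    congr 1
    simp only [hS, map_sum, map_smul]
  intro t
  induction t using Int.induction_on with
  | zero =>
      simp only [zpow_zero, one_smul, hS]
      rw [Finset.sum_eq_single 0]
      · simp [zbinom_zero, hw0]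
      · intro j _ hj
        rw [zbinom_zero_left hj]
        simp
      · intro h; simp at h
  | succ n ih =>
      have hmul : f ^ ((n : ℤ) + 1) = f * f ^ (n : ℤ) := by
        rw [zpow_add_one]
        exact ((Commute.refl f).zpow_left (n : ℤ)).eq
      calc (f ^ ((n:ℤ) + 1)) x = f ((f ^ (n:ℤ)) x) := by rw [hmul]; rfl
        _ = f (μ ^ (n:ℤ) • S (n:ℤ)) := by rw [ih]
        _ = μ ^ ((n:ℤ) + 1) • S ((n:ℤ) + 1) := step (n:ℤ)
  | pred n ih =>
      have e3 : (-(n:ℤ) - 1) + 1 = -(n:ℤ) := by ring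
      have hmul : f ^ (-(n : ℤ)) = f * f ^ (-(n : ℤ) - 1) := by
        conv_lhs => rw [← e3]
        rw [zpow_add_one]
        exact ((Commute.refl f).zpow_left (-(n : ℤ) - 1)).eq
      apply f.injective
      have e1 : f ((f ^ (-(n:ℤ) - 1)) x) = (f ^ (-(n:ℤ))) x := by rw [hmul]; rfl
      have e2 := step (-(n:ℤ) - 1)
      rw [e3] at e2
      rw [e1, ih, e2]

set_option maxHeartbeats 2000000 in
set_option synthInstance.maxHeartbeats 400000 in
/-- Let `V` be a finite-dimensional normed real vector space and
`g ∈ GL(V)` with trivial hyperbolic Jordan component, i.e. all complex eigenvalues of `g`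
have modulus `1`.  Then for every `x ≠ 0` there is `ε > 0` with `‖g^t x‖ > ε` for all
`t ∈ ℤ`. -/
theorem norm_orbit_bounded_below_of_modulus_one
    {V : Type*} [NormedAddCommGroup V] [NormedSpace ℝ V] [FiniteDimensional ℝ V]
    (g : V ≃ₗ[ℝ] V)
    (hspec : ∀ μ ∈ spectrum ℂ (LinearMap.baseChange ℂ (g : V →ₗ[ℝ] V)), ‖μ‖ = 1)
    (x : V) (hx : x ≠ 0) :
    ∃ ε > 0, ∀ t : ℤ, ε < ‖(g ^ t) x‖ := by
  classical
  set fE : Module.End ℂ (TensorProduct ℝ ℂ V) := LinearMap.baseChange ℂ (g : V →ₗ[ℝ] V)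
    with hfE
  set F : TensorProduct ℝ ℂ V ≃ₗ[ℂ] TensorProduct ℝ ℂ V := LinearEquiv.baseChange ℝ ℂ V V g
    with hF
  have hFE : ∀ z, F z = fE z := by
    intro z
    induction z using TensorProduct.induction_on with
    | zero => simp
    | tmul c v =>
        simp [hF, hfE, LinearEquiv.baseChange, LinearMap.baseChange_tmul]
    | add a b ha hb => rw [map_add, map_add, ha, hb]
  set ι : V →ₗ[ℝ] TensorProduct ℝ ℂ V := TensorProduct.mk ℝ ℂ V 1 with hι
  have hconj : ∀ v, F (ι v) = ι (g v) := by
    intro v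
    simp [hι, hF, LinearEquiv.baseChange, LinearMap.baseChange_tmul]
  -- ι x ≠ 0
  have hιx : ι x ≠ 0 := by
    obtain ⟨ψ, hψ⟩ : ∃ ψ : Module.Dual ℝ V, ψ x ≠ 0 := by
      by_contra hcon
      push_neg at hcon
      exact hx ((Module.forall_dual_apply_eq_zero_iff ℝ x).1 hcon)
    intro h0
    have : (LinearMap.baseChange ℂ ψ) (ι x) = 1 ⊗ₜ[ℝ] (ψ x) := by
      simp [hι, LinearMap.baseChange_tmul]
    rw [h0, map_zero] at this
    have h2 : (ψ x) • (1 : ℂ) = 0 := by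
      have h3 := congrArg (TensorProduct.rid ℝ ℂ) this
      rw [LinearEquiv.map_zero] at h3
      simpa only [TensorProduct.rid_tmul] using h3.symm
    exact hψ (by simpa using h2)
  -- generalized eigenspace decomposition
  have htop : ⨆ μ : ℂ, fE.maxGenEigenspace μ = ⊤ :=
    Module.End.iSup_maxGenEigenspace_eq_top fE
  have hmem : ι x ∈ ⨆ μ : ℂ, fE.maxGenEigenspace μ := htop ▸ Submodule.mem_top
  rw [Submodule.mem_iSup_iff_exists_finset] at hmem
  obtain ⟨s, hs⟩ := hmem
  rw [Submodule.mem_iSup_finset_iff_exists_sum] at hs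
  obtain ⟨comp, hsum⟩ := hs
  have hex : ∃ μ ∈ s, (comp μ : TensorProduct ℝ ℂ V) ≠ 0 := by
    by_contra hcon
    push_neg at hcon
    apply hιx
    rw [← hsum]
    exact Finset.sum_eq_zero hcon
  obtain ⟨μ, hμs, hxμ⟩ := hex
  set xμ : TensorProduct ℝ ℂ V := (comp μ : TensorProduct ℝ ℂ V) with hxμdef
  have hxμmem : xμ ∈ fE.maxGenEigenspace μ := (comp μ).2
  set y : TensorProduct ℝ ℂ V := ∑ ν ∈ s.erase μ, (comp ν : TensorProduct ℝ ℂ V) with hy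
  have hxy : ι x = xμ + y := by
    rw [hy, hxμdef, ← hsum, Finset.add_sum_erase s (fun ν => ((comp ν : TensorProduct ℝ ℂ V))) hμs]
  set O : Submodule ℂ (TensorProduct ℝ ℂ V) :=
    ⨆ ν, ⨆ _ : ν ≠ μ, fE.maxGenEigenspace ν with hO
  have hyO : y ∈ O := by
    rw [hy]
    apply Submodule.sum_mem
    intro ν hν
    have hνμ : ν ≠ μ := Finset.ne_of_mem_erase hν
    exact Submodule.mem_iSup_of_mem ν (Submodule.mem_iSup_of_mem hνμ (comp ν).2)
  -- μ is in the spectrum, so it has norm 1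
  have hμspec : μ ∈ spectrum ℂ fE := by
    have h1 : fE.HasUnifEigenvalue μ ⊤ := by
      rw [Module.End.HasUnifEigenvalue]
      exact Submodule.ne_bot_iff _ |>.2 ⟨xμ, hxμmem, hxμ⟩
    have h2 : fE.HasUnifEigenvalue μ 1 :=
      (Module.End.hasUnifEigenvalue_iff_hasUnifEigenvalue_one (by norm_num)).1 h1
    exact h2.mem_spectrum
  have hμnorm : ‖μ‖ = 1 := hspec μ hμspec
  have hμ0 : μ ≠ 0 := by
    intro h
    rw [h, norm_zero] at hμnorm
    norm_num at hμnorm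
  -- nilpotent part on the generalized eigenspace
  set NN : Module.End ℂ (TensorProduct ℝ ℂ V) := fE - μ • 1 with hNN
  have hexm : ∃ m : ℕ, (NN ^ m) xμ = 0 := by
    rw [Module.End.mem_maxGenEigenspace] at hxμmem
    exact hxμmem
  set n₀ : ℕ := Nat.find hexm with hn₀
  have hn₀pos : 0 < n₀ := by
    rcases Nat.eq_zero_or_pos n₀ with h | h
    · exfalso
      have := Nat.find_spec hexm
      rw [← hn₀, h] at this
      simp only [pow_zero, Module.End.one_apply] at this
      exact hxμ this
    · exact h
  set k : ℕ := n₀ - 1 with hkdef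
  have hk1 : (NN ^ (k + 1)) xμ = 0 := by
    have : k + 1 = n₀ := by omega
    rw [this]
    exact Nat.find_spec hexm
  have hk : (NN ^ k) xμ ≠ 0 := Nat.find_min hexm (by omega)
  have hNNpow_zero : ∀ m : ℕ, k + 1 ≤ m → (NN ^ m) xμ = 0 := by
    intro m hm
    have : NN ^ m = NN ^ (m - (k+1)) * NN ^ (k+1) := by
      rw [← pow_add]; congr 1; omega
    rw [this, Module.End.mul_apply, hk1, map_zero]
  -- the vectors w j
  set w : ℕ → TensorProduct ℝ ℂ V := fun j => (μ⁻¹) ^ j • ((NN ^ j) xμ) with hw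
  have hw0 : w 0 = xμ := by simp [hw]
  have hwsucc : ∀ j, F (w j) = μ • w j + μ • w (j + 1) := by
    intro j
    rw [hFE]
    have hfe : fE (w j) = μ • w j + NN (w j) := by
      rw [hNN]
      simp only [LinearMap.sub_apply, LinearMap.smul_apply, Module.End.one_apply]
      abel
    rw [hfe]
    congr 1
    rw [hw]
    simp only [map_smul]
    rw [← Module.End.mul_apply NN, ← pow_succ']
    rw [smul_smul]
    congr 1
    rw [pow_succ]
    field_simp
  have hwtop : w (k + 1) = 0 := by rw [hw]; simp only [hk1, smul_zero]
  have hbin := key_binom F μ hμ0 xμ k w hw0 hwsucc hwtop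
  -- the functional φ
  set U : Submodule ℂ (TensorProduct ℝ ℂ V) :=
    Submodule.span ℂ (Set.range fun j : Fin k => (NN ^ (j : ℕ)) xμ) ⊔ O with hU
  have hmaxmem : ∀ j : ℕ, (NN ^ j) xμ ∈ fE.maxGenEigenspace μ := by
    intro j
    rw [Module.End.mem_maxGenEigenspace]
    refine ⟨k + 1, ?_⟩
    rw [← hNN, ← Module.End.mul_apply, ← pow_add]
    have : k + 1 + j = j + (k + 1) := by omega
    rw [this, pow_add, Module.End.mul_apply, hk1, map_zero]
  have hnm : (NN ^ k) xμ ∉ U := by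
    intro hmem
    rw [hU, Submodule.mem_sup] at hmem
    obtain ⟨u, hu, o, ho, huo⟩ := hmem
    have huMax : u ∈ fE.maxGenEigenspace μ := by
      have hle : Submodule.span ℂ (Set.range fun j : Fin k => (NN ^ (j : ℕ)) xμ)
          ≤ fE.maxGenEigenspace μ := by
        rw [Submodule.span_le]
        rintro _ ⟨j, rfl⟩
        exact hmaxmem (j : ℕ)
      exact hle hu
    have hoMax : o ∈ fE.maxGenEigenspace μ := by
      have : o = (NN ^ k) xμ - u := by rw [← huo]; abel
      rw [this]
      exact Submodule.sub_mem _ (hmaxmem k) huMax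
    have ho0 : o = 0 := by
      have hind := Module.End.independent_maxGenEigenspace fE
      exact Submodule.disjoint_def.mp (hind μ) o hoMax ho
    rw [ho0, add_zero] at huo
    exact nilpotent_orbit_not_mem_span NN xμ k hk hk1 (huo ▸ hu)
  obtain ⟨φ, hφk, hφmap⟩ := Submodule.exists_dual_map_eq_bot_of_notMem hnm inferInstance
  have hφU : ∀ v ∈ U, φ v = 0 := by
    intro v hv
    have : φ v ∈ U.map φ := Submodule.mem_map_of_mem hv
    rw [hφmap] at this
    simpa using this
  -- φ values on the w j
  have hφw : ∀ j < k, φ (w j) = 0 := by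
    intro j hj
    apply hφU
    rw [hw]
    apply Submodule.smul_mem
    apply Submodule.mem_sup_left
    exact Submodule.subset_span ⟨⟨j, hj⟩, rfl⟩
  set a : ℂ := φ (w k) with ha
  have ha0 : a ≠ 0 := by
    rw [ha, hw]
    simp only [map_smul, smul_eq_mul]
    exact mul_ne_zero (pow_ne_zero _ (inv_ne_zero hμ0)) hφk
  -- maximal generalized eigenspaces are invariant under F and F.symm
  have hcomm : ∀ (ν : ℂ) (m : ℕ) (z : TensorProduct ℝ ℂ V),
      ((fE - ν • 1) ^ m) (F z) = F (((fE - ν • 1) ^ m) z) := by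
    intro ν m
    induction m with
    | zero => intro z; simp
    | succ m ih =>
        intro z
        have h2 : (fE - ν • 1) (F z) = F ((fE - ν • 1) z) := by
          simp only [LinearMap.sub_apply, LinearMap.smul_apply, Module.End.one_apply,
            map_sub, map_smul]
          rw [← hFE (F z), ← hFE z]
        rw [pow_succ, Module.End.mul_apply, Module.End.mul_apply, h2, ih]
  have hFinv : ∀ (ν : ℂ) (v : TensorProduct ℝ ℂ V),
      v ∈ fE.maxGenEigenspace ν → F v ∈ fE.maxGenEigenspace ν := by
    intro ν v hv
    rw [Module.End.mem_maxGenEigenspace] at hv ⊢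
    obtain ⟨m, hm⟩ := hv
    exact ⟨m, by rw [hcomm ν m v, hm, map_zero]⟩
  have hFsinv : ∀ (ν : ℂ) (v : TensorProduct ℝ ℂ V),
      v ∈ fE.maxGenEigenspace ν → F.symm v ∈ fE.maxGenEigenspace ν := by
    intro ν v hv
    rw [Module.End.mem_maxGenEigenspace] at hv ⊢
    obtain ⟨m, hm⟩ := hv
    refine ⟨m, F.injective ?_⟩
    rw [← hcomm ν m (F.symm v), F.apply_symm_apply, hm, map_zero]
  -- O is invariant under F, F.symm, hence under all integer powers
  have hOF : ∀ v ∈ O, F v ∈ O := by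
    intro v hv
    have hle : O.map (F : TensorProduct ℝ ℂ V →ₗ[ℂ] TensorProduct ℝ ℂ V) ≤ O := by
      rw [hO, Submodule.map_iSup]
      apply iSup_le
      intro ν
      rw [Submodule.map_iSup]
      apply iSup_le
      intro hν
      have h1 : (fE.maxGenEigenspace ν).map
          (F : TensorProduct ℝ ℂ V →ₗ[ℂ] TensorProduct ℝ ℂ V) ≤ fE.maxGenEigenspace ν := by
        rintro _ ⟨v', hv', rfl⟩
        exact hFinv ν v' hv'
      exact le_trans h1 (le_iSup_of_le ν (le_iSup_of_le hν le_rfl))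
    exact hle (Submodule.mem_map_of_mem hv)
  have hOFs : ∀ v ∈ O, F.symm v ∈ O := by
    intro v hv
    have hle : O.map (F.symm : TensorProduct ℝ ℂ V →ₗ[ℂ] TensorProduct ℝ ℂ V) ≤ O := by
      rw [hO, Submodule.map_iSup]
      apply iSup_le
      intro ν
      rw [Submodule.map_iSup]
      apply iSup_le
      intro hν
      have h1 : (fE.maxGenEigenspace ν).map
          (F.symm : TensorProduct ℝ ℂ V →ₗ[ℂ] TensorProduct ℝ ℂ V)
          ≤ fE.maxGenEigenspace ν := by
        rintro _ ⟨v', hv', rfl⟩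
        exact hFsinv ν v' hv'
      exact le_trans h1 (le_iSup_of_le ν (le_iSup_of_le hν le_rfl))
    exact hle (Submodule.mem_map_of_mem hv)
  have hOzpow : ∀ (t : ℤ), (F ^ t) y ∈ O :=
    fun t => zpow_pred_ind F (· ∈ O) hOF hOFs t y hyO
  have hOU : O ≤ U := le_sup_right
  -- the main formula
  have hmain : ∀ t : ℤ, φ (ι ((g ^ t) x)) = μ ^ t * ((zbinom t k : ℂ) * a) := by
    intro t
    rw [← zpow_conj g F ι hconj t x, hxy, map_add, map_add]
    have h2 : φ ((F ^ t) y) = 0 := hφU _ (hOU (hOzpow t))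
    have h1 : φ ((F ^ t) xμ) = μ ^ t * ((zbinom t k : ℂ) * a) := by
      rw [hbin t, map_smul, map_sum, smul_eq_mul]
      congr 1
      rw [Finset.sum_eq_single k]
      · rw [map_smul, smul_eq_mul, ha]
      · intro j hj hjk
        have : j < k := by
          have := Finset.mem_range.1 hj
          omega
        rw [map_smul, hφw j this, smul_zero]
      · intro hkk
        exact absurd (Finset.self_mem_range_succ k) hkk
    rw [h1, h2, add_zero]
  -- norm of the functional values
  have hnorm : ∀ t : ℤ, ‖φ (ι ((g ^ t) x))‖ = |zbinom t k| * ‖a‖ := by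
    intro t
    rw [hmain t, norm_mul, norm_mul, norm_zpow, hμnorm, one_zpow, one_mul, Complex.norm_real,
      Real.norm_eq_abs]
  -- continuity of the composed functional
  set Φ : V →ₗ[ℝ] ℂ := (φ.restrictScalars ℝ).comp ι with hΦ
  set Φc := LinearMap.toContinuousLinearMap Φ with hΦc
  set C : ℝ := ‖Φc‖ + 1 with hC
  have hCpos : 0 < C := by
    rw [hC]
    have := norm_nonneg Φc
    linarith
  have hbound : ∀ v : V, ‖φ (ι v)‖ ≤ C * ‖v‖ := by
    intro v
    have h1 : ‖Φc v‖ ≤ ‖Φc‖ * ‖v‖ := Φc.le_opNorm v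
    have h2 : Φc v = φ (ι v) := rfl
    have h3 : ‖Φc‖ * ‖v‖ ≤ C * ‖v‖ :=
      mul_le_mul_of_nonneg_right (by rw [hC]; linarith) (norm_nonneg v)
    rw [h2] at h1
    linarith
  set r : ℝ := ‖a‖ / C with hr
  have hrpos : 0 < r := div_pos (norm_pos_iff.2 ha0) hCpos
  have hgood : ∀ t : ℤ, (t < 0 ∨ (k : ℤ) ≤ t) → r ≤ ‖(g ^ t) x‖ := by
    intro t ht
    have h1 : 1 ≤ |zbinom t k| := one_le_abs_zbinom ht
    have h2 : ‖a‖ ≤ |zbinom t k| * ‖a‖ := le_mul_of_one_le_left (norm_nonneg a) h1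
    have h3 : |zbinom t k| * ‖a‖ ≤ C * ‖(g ^ t) x‖ := by
      rw [← hnorm t]
      exact hbound _
    rw [hr, div_le_iff₀ hCpos]
    nlinarith [norm_nonneg ((g ^ t) x)]
  -- the finite exceptional set
  set S : Finset ℝ := insert r ((Finset.range k).image fun j : ℕ => ‖(g ^ ((j : ℕ) : ℤ)) x‖) with hS
  have hSne : S.Nonempty := ⟨r, Finset.mem_insert_self r _⟩
  set m := S.min' hSne with hm
  have hmpos : 0 < m := by
    rw [hm]
    rcases Finset.mem_insert.1 (S.min'_mem hSne) with h | h
    · rw [h]; exact hrpos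
    · obtain ⟨j, _, hj⟩ := Finset.mem_image.1 h
      rw [← hj]
      apply norm_pos_iff.2
      intro h0
      exact hx ((LinearEquiv.map_eq_zero_iff _).1 h0)
  refine ⟨m / 2, by positivity, ?_⟩
  intro t
  by_cases ht : t < 0 ∨ (k : ℤ) ≤ t
  · have h1 := hgood t ht
    have h2 : m ≤ r := by rw [hm]; exact S.min'_le r (Finset.mem_insert_self _ _)
    linarith
  · push_neg at ht
    obtain ⟨ht0, htk⟩ := ht
    have hjm : ‖(g ^ t) x‖ ∈ S := by
      rw [hS]
      apply Finset.mem_insert_of_mem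
      have heq : ‖(g ^ t) x‖ = ‖(g ^ ((t.toNat : ℕ) : ℤ)) x‖ := by
        rw [Int.toNat_of_nonneg ht0]
      rw [heq]
      exact Finset.mem_image_of_mem (fun j : ℕ => ‖(g ^ ((j : ℕ) : ℤ)) x‖)
        (Finset.mem_range.2 (show t.toNat < k by omega))
    have h2 : m ≤ ‖(g ^ t) x‖ := by rw [hm]; exact S.min'_le _ hjm
    linarith
end

section
/- Let V be a finite-dimensional real vector space, N: V → V a nilpotent linear map, and x ≠ 0. Let k be the largest integer with v := N^k x ≠ 0 (so N^{k+1} x = 0). Then in projective space, e^{tN}[x] → [v] as t → +∞ and as t → −∞, and moreover e^{tN} v = v for all t. -/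
set_option synthInstance.maxHeartbeats 1000000
set_option maxHeartbeats 1000000

open Filter Topology LinearAlgebra.Projectivization
open Nat

private lemma aux_exp_apply {V : Type*} [NormedAddCommGroup V] [NormedSpace ℝ V]
    [FiniteDimensional ℝ V]
    (N : V →L[ℝ] V) (t : ℝ) (y : V) (m : ℕ) (hm : ∀ n, m ≤ n → (N ^ n) y = 0) :
    NormedSpace.exp (t • N) y = ∑ n ∈ Finset.range m, (t ^ n / n !) • (N ^ n) y := by
  have hs : Summable fun n : ℕ => ((n ! : ℝ))⁻¹ • (t • N) ^ n :=
    NormedSpace.expSeries_summable' (t • N)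
  rw [NormedSpace.exp_eq_tsum (𝕂 := ℝ)]
  have happ := (ContinuousLinearMap.apply ℝ V y).map_tsum hs
  simp only [ContinuousLinearMap.apply_apply] at happ
  rw [happ]
  rw [tsum_eq_sum (s := Finset.range m) ?h]
  · refine Finset.sum_congr rfl fun n _ => ?_
    simp [smul_pow, smul_smul, div_eq_inv_mul]
  · intro n hn
    simp [smul_pow, hm n (by simpa using hn)]

private lemma aux_mk_tendsto {V : Type*} [NormedAddCommGroup V] [NormedSpace ℝ V]
    {l : Filter ℝ} {f : ℝ → V} (hf : ∀ t, f t ≠ 0) {v : V} (hv : v ≠ 0)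
    (h : Tendsto f l (𝓝 v)) :
    Tendsto (fun t => Projectivization.mk ℝ (f t) (hf t)) l
      (𝓝 (Projectivization.mk ℝ v hv)) := by
  have h1 : Tendsto (fun t => (⟨f t, hf t⟩ : {w : V // w ≠ 0})) l (𝓝 ⟨v, hv⟩) := by
    rw [tendsto_subtype_rng]; exact h
  exact (continuous_quotient_mk'.tendsto _).comp h1

/-- Let `N` be a nilpotent endomorphism of a finite-dimensional real
vector space, `x ≠ 0`, and `k` the largest integer with `v := N^k x ≠ 0` (so
`N^{k+1} x = 0`).  Then `e^{tN} v = v` for all `t`, and in projective space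
`e^{tN}[x] → [v]` as `t → +∞` and as `t → -∞`. -/
theorem unipotent_projective_limit
    {V : Type*} [NormedAddCommGroup V] [NormedSpace ℝ V] [FiniteDimensional ℝ V]
    (N : V →L[ℝ] V) (hN : IsNilpotent N) (x : V) (hx : x ≠ 0) (k : ℕ)
    (hk1 : (N ^ (k + 1)) x = 0) (hk : (N ^ k) x ≠ 0)
    (hexp : ∀ t : ℝ, NormedSpace.exp (t • N) x ≠ 0) :
    (∀ t : ℝ, NormedSpace.exp (t • N) ((N ^ k) x) = (N ^ k) x) ∧
    Tendsto (fun t : ℝ => Projectivization.mk ℝ (NormedSpace.exp (t • N) x) (hexp t))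
      atTop (𝓝 (Projectivization.mk ℝ ((N ^ k) x) hk)) ∧
    Tendsto (fun t : ℝ => Projectivization.mk ℝ (NormedSpace.exp (t • N) x) (hexp t))
      atBot (𝓝 (Projectivization.mk ℝ ((N ^ k) x) hk)) := by
  -- N^n x = 0 for n ≥ k+1
  have hzero : ∀ n, k + 1 ≤ n → (N ^ n) x = 0 := by
    intro n hn
    have : N ^ n = N ^ (n - (k + 1)) * N ^ (k + 1) := by
      rw [← pow_add, Nat.sub_add_cancel hn]
    rw [this, ContinuousLinearMap.mul_apply, hk1, map_zero]
  -- Part 1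
  have part1 : ∀ t : ℝ, NormedSpace.exp (t • N) ((N ^ k) x) = (N ^ k) x := by
    intro t
    have hm : ∀ n, 1 ≤ n → (N ^ n) ((N ^ k) x) = 0 := by
      intro n hn
      have : (N ^ n) ((N ^ k) x) = (N ^ (n + k)) x := by
        rw [pow_add, ContinuousLinearMap.mul_apply]
      rw [this, hzero _ (by omega)]
    rw [aux_exp_apply N t _ 1 hm]
    simp
  refine ⟨part1, ?_, ?_⟩ <;>
  · -- common limit argument
    set F : ℝ → V := fun s => ∑ j ∈ Finset.range (k + 1), (s ^ (k - j) / j !) • (N ^ j) x with hF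
    have hFcont : Continuous F := by
      apply continuous_finset_sum
      intro j _
      exact ((continuous_pow _).div_const _).smul continuous_const
    have hF0 : F 0 = ((k ! : ℝ))⁻¹ • (N ^ k) x := by
      show (∑ j ∈ Finset.range (k + 1), ((0:ℝ) ^ (k - j) / (j ! : ℝ)) • (N ^ j) x) = _
      rw [Finset.sum_eq_single k]
      · rw [Nat.sub_self, pow_zero, one_div]
      · intro j hj hjk
        have : 0 < k - j := by
          simp only [Finset.mem_range] at hj; omega
        simp [zero_pow (Nat.pos_iff_ne_zero.mp this)]
      · intro h; exact absurd (Finset.self_mem_range_succ k) h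
    have hF0ne : F 0 ≠ 0 := by
      rw [hF0]
      exact smul_ne_zero (inv_ne_zero (by exact_mod_cast k.factorial_ne_zero)) hk
    set g : ℝ → V := fun t => (if t = 0 then 1 else (t⁻¹) ^ k) • NormedSpace.exp (t • N) x
      with hg
    have hgne : ∀ t, g t ≠ 0 := by
      intro t
      apply smul_ne_zero _ (hexp t)
      split
      · exact one_ne_zero
      · exact pow_ne_zero _ (inv_ne_zero (by assumption))
    have hgF : ∀ t : ℝ, t ≠ 0 → g t = F t⁻¹ := by
      intro t ht
      rw [hg, hF]
      simp only [if_neg ht]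
      rw [aux_exp_apply N t x (k + 1) hzero, Finset.smul_sum]
      refine Finset.sum_congr rfl fun j hj => ?_
      rw [smul_smul]
      congr 1
      have hjk : j ≤ k := Nat.lt_succ_iff.mp (Finset.mem_range.mp hj)
      rw [div_eq_mul_inv, div_eq_mul_inv, ← mul_assoc]
      congr 1
      rw [show k = (k - j) + j from (Nat.sub_add_cancel hjk).symm, pow_add, mul_assoc,
        ← mul_pow, inv_mul_cancel₀ ht, one_pow, mul_one, Nat.add_sub_cancel]
    have hmkeq : ∀ t : ℝ, Projectivization.mk ℝ (NormedSpace.exp (t • N) x) (hexp t)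
        = Projectivization.mk ℝ (g t) (hgne t) := by
      intro t
      rw [Projectivization.mk_eq_mk_iff']
      have hs : (if t = 0 then 1 else (t⁻¹) ^ k) ≠ 0 := by
        split
        · exact one_ne_zero
        · exact pow_ne_zero _ (inv_ne_zero (by assumption))
      refine ⟨(if t = 0 then 1 else (t⁻¹) ^ k)⁻¹, ?_⟩
      rw [hg]
      exact inv_smul_smul₀ hs _
    have hmkF0 : Projectivization.mk ℝ (F 0) hF0ne = Projectivization.mk ℝ ((N ^ k) x) hk := by
      rw [Projectivization.mk_eq_mk_iff']
      exact ⟨_, hF0.symm⟩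
    have key : ∀ l : Filter ℝ, Tendsto (fun t : ℝ => t⁻¹) l (𝓝 0) →
        (∀ᶠ t in l, t ≠ (0 : ℝ)) →
        Tendsto (fun t : ℝ => Projectivization.mk ℝ (NormedSpace.exp (t • N) x) (hexp t)) l
          (𝓝 (Projectivization.mk ℝ ((N ^ k) x) hk)) := by
      intro l hinv hev
      rw [funext hmkeq, ← hmkF0]
      apply aux_mk_tendsto hgne hF0ne
      refine Tendsto.congr' (f₁ := F ∘ fun t : ℝ => t⁻¹) ?_ ((hFcont.tendsto 0).comp hinv)
      filter_upwards [hev] with t ht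
      exact (hgF t ht).symm
    have hinvBot : Tendsto (fun t : ℝ => t⁻¹) atBot (𝓝 (0 : ℝ)) := by
      have h1 : Tendsto (fun t : ℝ => (-t)⁻¹) atBot (𝓝 (0 : ℝ)) :=
        tendsto_inv_atTop_zero.comp tendsto_neg_atBot_atTop
      have h2 := h1.neg
      rw [neg_zero] at h2
      refine h2.congr fun t => ?_
      rw [inv_neg, neg_neg]
    first
    | exact key atTop tendsto_inv_atTop_zero (eventually_ne_atTop 0)
    | exact key atBot hinvBot (eventually_ne_atBot 0)
end

section
/- Let g ∈ GL(V) with Jordan decomposition g = e h u, and let V = V_{λ₁} ⊕ ⋯ ⊕ V_{λ_n} be the eigenspace decomposition of the hyperbolic part h with eigenvalues λ₁ > λ₂ > ⋯ > λ_n > 0. For v = v₁ + ⋯ + v_n with v_k ∈ V_{λ_k}, v ≠ 0, let i be the smallest index with v_i ≠ 0. Then every limit point of the sequence g^t[v] in ℙ(V) as t → +∞ lies in ℙ(V_{λ_i}); i.e., the omega-limit set ω([v]) is contained in ℙ(V_{λ_i}). -/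
open Filter Topology LinearAlgebra.Projectivization

/-- The flow induced on projective space by iterating a linear automorphism. -/
def projFlow {K V : Type*} [Field K] [AddCommGroup V] [Module K V]
    (g : V ≃ₗ[K] V) (t : ℤ) : ℙ K V → ℙ K V :=
  Projectivization.map ((g ^ t : V ≃ₗ[K] V) : V →ₗ[K] V) (g ^ t).injective

section Helpers
open TensorProduct


variable {K : Type*} [Field K] {W : Type*} [AddCommGroup W] [Module K W]

lemma lequiv_mul_apply' (a b : W ≃ₗ[K] W) (x : W) : (a * b) x = a (b x) := rfl

lemma lequiv_inv_eq_symm (a : W ≃ₗ[K] W) : a⁻¹ = a.symm := rfl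

lemma pow_intertwine {K' : Type*} [Field K'] {W' : Type*} [AddCommGroup W'] [Module K' W']
    (f : W ≃ₗ[K] W) (f' : W' ≃ₗ[K'] W') (T : W → W')
    (hT : ∀ x, f' (T x) = T (f x)) : ∀ (t : ℕ) (x : W), (f' ^ t) (T x) = T ((f ^ t) x) := by
  intro t
  induction t with
  | zero => simp
  | succ n ih =>
      intro x
      rw [pow_succ, pow_succ, lequiv_mul_apply', lequiv_mul_apply', hT, ih]

lemma zpow_intertwine {K' : Type*} [Field K'] {W' : Type*} [AddCommGroup W'] [Module K' W']
    (f : W ≃ₗ[K] W) (f' : W' ≃ₗ[K'] W') (T : W → W')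
    (hT : ∀ x, f' (T x) = T (f x)) : ∀ (t : ℤ) (x : W), (f' ^ t) (T x) = T ((f ^ t) x) := by
  have hT' : ∀ x, f'.symm (T x) = T (f.symm x) := by
    intro x
    apply f'.injective
    rw [f'.apply_symm_apply, hT, f.apply_symm_apply]
  intro t
  cases t with
  | ofNat n => simpa using pow_intertwine f f' T hT n
  | negSucc n =>
      rw [zpow_negSucc, zpow_negSucc, ← inv_pow, ← inv_pow]
      exact pow_intertwine f.symm f'.symm T hT' (n + 1)

section reMapSect
variable (U : Type*) [AddCommGroup U] [Module ℝ U]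

/-- "real part" map `ℂ ⊗[ℝ] V →ₗ[ℝ] V`. -/
noncomputable def reMap : ℂ ⊗[ℝ] U →ₗ[ℝ] U :=
  TensorProduct.lift (LinearMap.mk₂ ℝ (fun c (v : U) => c.re • v)
    (fun c c' v => by simp [add_smul])
    (fun s c v => by simp [mul_smul])
    (fun c v v' => by simp [smul_add])
    (fun s c v => by simp [smul_comm s]))

variable {U}

@[simp] lemma reMap_tmul (c : ℂ) (v : U) :
    reMap U (c ⊗ₜ[ℝ] v) = c.re • v := rfl

lemma reMap_smul (c : ℂ) (w : ℂ ⊗[ℝ] U) :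
    reMap U (c • w) = c.re • reMap U w + c.im • reMap U (Complex.I • w) := by
  induction w using TensorProduct.induction_on with
  | zero => simp
  | tmul d v =>
      show (reMap U) ((c * d) ⊗ₜ[ℝ] v) = _ + _ • (reMap U) ((Complex.I * d) ⊗ₜ[ℝ] v)
      rw [reMap_tmul, reMap_tmul, reMap_tmul]
      simp only [Complex.mul_re, Complex.I_re, Complex.I_im, zero_mul, one_mul, zero_sub,
        sub_smul, smul_smul, neg_smul, smul_neg]
      ring_nf
      module
  | add w₁ w₂ ih₁ ih₂ =>
      simp only [smul_add, map_add, ih₁, ih₂]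
      abel

end reMapSect

lemma eqPow_apply_smul {K : Type*} [Field K] {W : Type*} [AddCommGroup W] [Module K W]
    (f : W ≃ₗ[K] W) {μ : K} {w : W} (hw : f w = μ • w) :
    ∀ t : ℕ, (f ^ t) w = μ ^ t • w := by
  intro t
  induction t with
  | zero => simp
  | succ n ih =>
      rw [pow_succ, lequiv_mul_apply', hw, map_smul, ih, smul_smul, pow_succ, mul_comm]

lemma zpow_apply_smul {K : Type*} [Field K] {W : Type*} [AddCommGroup W] [Module K W]
    (f : W ≃ₗ[K] W) {μ : K} (hμ : μ ≠ 0) {w : W} (hw : f w = μ • w) :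
    ∀ t : ℤ, (f ^ t) w = μ ^ t • w := by
  have hsymm : f.symm w = μ⁻¹ • w := by
    apply f.injective
    rw [f.apply_symm_apply, map_smul, hw, smul_smul, inv_mul_cancel₀ hμ, one_smul]
  intro t
  cases t with
  | ofNat n => simpa using eqPow_apply_smul f hw n
  | negSucc n =>
      rw [zpow_negSucc, ← inv_pow, lequiv_inv_eq_symm, zpow_negSucc, ← inv_pow, inv_pow, ← inv_pow]
      simpa using eqPow_apply_smul f.symm hsymm (n + 1)

lemma equivPow_mem {K : Type*} [Field K] {W : Type*} [AddCommGroup W] [Module K W]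
    (f : W ≃ₗ[K] W) (p : Submodule K W) (hf : ∀ x ∈ p, f x ∈ p) :
    ∀ t : ℕ, ∀ x ∈ p, (f ^ t) x ∈ p := by
  intro t
  induction t with
  | zero => simp
  | succ n ih =>
      intro x hx
      rw [pow_succ, lequiv_mul_apply']
      exact ih _ (hf x hx)

lemma equivZpow_mem {K : Type*} [Field K] {W : Type*} [AddCommGroup W] [Module K W]
    (f : W ≃ₗ[K] W) (p : Submodule K W) (hf : ∀ x ∈ p, f x ∈ p)
    (hf' : ∀ x ∈ p, f.symm x ∈ p) : ∀ t : ℤ, ∀ x ∈ p, (f ^ t) x ∈ p := by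
  intro t
  cases t with
  | ofNat n => simpa using equivPow_mem f p hf n
  | negSucc n =>
      rw [zpow_negSucc, ← inv_pow]
      exact equivPow_mem f⁻¹ p hf' (n + 1)

lemma comm_maps_eigenspace {K : Type*} [Field K] {W : Type*} [AddCommGroup W] [Module K W]
    (f h : W ≃ₗ[K] W)
    (hc : Commute (f : W →ₗ[K] W) (h : W →ₗ[K] W)) (μ : K) :
    (∀ x ∈ Module.End.eigenspace (h : W →ₗ[K] W) μ,
        f x ∈ Module.End.eigenspace (h : W →ₗ[K] W) μ) ∧
    (∀ x ∈ Module.End.eigenspace (h : W →ₗ[K] W) μ,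
        f.symm x ∈ Module.End.eigenspace (h : W →ₗ[K] W) μ) := by
  have key : ∀ x, (h : W →ₗ[K] W) (f x) = f ((h : W →ₗ[K] W) x) := by
    intro x
    have := congrFun (congrArg DFunLike.coe hc.symm.eq) x
    simpa [Module.End.mul_apply] using this
  constructor
  · intro x hx
    rw [Module.End.mem_eigenspace_iff] at hx ⊢
    show (h : W →ₗ[K] W) (f x) = μ • f x
    rw [key, hx, map_smul]
  · intro x hx
    rw [Module.End.mem_eigenspace_iff] at hx ⊢
    show (h : W →ₗ[K] W) (f.symm x) = μ • f.symm x
    apply f.injective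
    rw [← key, f.apply_symm_apply, map_smul, f.apply_symm_apply, hx]

section eBound
variable {V : Type*} [NormedAddCommGroup V] [NormedSpace ℝ V] [FiniteDimensional ℝ V]

lemma baseChangeEquiv_eq (e : V ≃ₗ[ℝ] V) (w : ℂ ⊗[ℝ] V) :
    LinearEquiv.baseChange ℝ ℂ V V e w = LinearMap.baseChange ℂ (e : V →ₗ[ℝ] V) w := by
  induction w using TensorProduct.induction_on with
  | zero => simp
  | tmul c x => simp [LinearEquiv.baseChange, LinearMap.baseChange_tmul]
  | add w₁ w₂ ih₁ ih₂ => simp [ih₁, ih₂]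

lemma e_bound_vec (e : V ≃ₗ[ℝ] V)
    (hss : Module.End.IsSemisimple (LinearMap.baseChange ℂ (e : V →ₗ[ℝ] V)))
    (hsp : ∀ μ ∈ spectrum ℂ (LinearMap.baseChange ℂ (e : V →ₗ[ℝ] V)), ‖μ‖ = 1) (x : V) :
    ∃ C, ∀ t : ℤ, ‖((e ^ t : V ≃ₗ[ℝ] V)) x‖ ≤ C := by
  set E := LinearMap.baseChange ℂ (e : V →ₗ[ℝ] V) with hE
  set F := LinearEquiv.baseChange ℝ ℂ V V e with hF
  have htop : ⨆ μ : ℂ, Module.End.eigenspace E μ = ⊤ := by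
    have h1 := Module.End.iSup_maxGenEigenspace_eq_top E
    have h2 : ∀ μ : ℂ, Module.End.maxGenEigenspace E μ = Module.End.eigenspace E μ := fun μ =>
      hss.isFinitelySemisimple.maxGenEigenspace_eq_eigenspace μ
    simp_rw [h2] at h1
    exact h1
  have hmem : (1 : ℂ) ⊗ₜ[ℝ] x ∈ ⨆ μ : ℂ, Module.End.eigenspace E μ := htop ▸ Submodule.mem_top
  obtain ⟨c, hcmem, hcsum⟩ := (Submodule.mem_iSup_iff_exists_finsupp _ _).1 hmem
  -- each eigenvalue occurring nontrivially has norm 1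
  have hnorm : ∀ μ ∈ c.support, ‖μ‖ = 1 := by
    intro μ hμ
    apply hsp
    rw [← Module.End.hasEigenvalue_iff_mem_spectrum]
    exact Module.End.hasEigenvalue_of_hasEigenvector
      ⟨hcmem μ, Finsupp.mem_support_iff.1 hμ⟩
  -- F^t on eigenvectors
  have hFzpow : ∀ μ ∈ c.support, ∀ t : ℤ, (F ^ t) (c μ) = μ ^ t • c μ := by
    intro μ hμ t
    have hμ0 : μ ≠ 0 := by
      intro h0
      have := hnorm μ hμ
      rw [h0] at this
      simp at this
    apply zpow_apply_smul F hμ0 _ t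
    rw [baseChangeEquiv_eq]
    exact Module.End.mem_eigenspace_iff.1 (hcmem μ)
  -- intertwining with 1 ⊗ ·
  have hT : ∀ y : V, F ((1 : ℂ) ⊗ₜ[ℝ] y) = (1 : ℂ) ⊗ₜ[ℝ] (e y) := by
    intro y
    rw [baseChangeEquiv_eq, LinearMap.baseChange_tmul]
    rfl
  have hint := zpow_intertwine e F (fun y : V => (1 : ℂ) ⊗ₜ[ℝ] y) (fun y => hT y)
  refine ⟨∑ μ ∈ c.support, (‖reMap V (c μ)‖ + ‖reMap V (Complex.I • c μ)‖), fun t => ?_⟩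
  have key : (1 : ℂ) ⊗ₜ[ℝ] ((e ^ t : V ≃ₗ[ℝ] V) x) = ∑ μ ∈ c.support, μ ^ t • c μ := by
    have h3 := hint t x
    rw [← h3, ← hcsum, Finsupp.sum, map_sum]
    exact Finset.sum_congr rfl fun μ hμ => hFzpow μ hμ t
  have hre : ((e ^ t : V ≃ₗ[ℝ] V)) x = reMap V (∑ μ ∈ c.support, μ ^ t • c μ) := by
    rw [← key, reMap_tmul]
    simp
  rw [hre, map_sum]
  refine (norm_sum_le _ _).trans (Finset.sum_le_sum fun μ hμ => ?_)
  rw [reMap_smul]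
  refine (norm_add_le _ _).trans ?_
  have h1 : ‖μ ^ t‖ = 1 := by rw [norm_zpow, hnorm μ hμ, one_zpow]
  have hre' : |(μ ^ t).re| ≤ 1 := by
    rw [← h1]; exact Complex.abs_re_le_norm _
  have him' : |(μ ^ t).im| ≤ 1 := by
    rw [← h1]; exact Complex.abs_im_le_norm _
  rw [norm_smul, norm_smul]
  refine add_le_add ?_ ?_
  · exact mul_le_of_le_one_left (norm_nonneg _) (by simpa [Real.norm_eq_abs] using hre')
  · exact mul_le_of_le_one_left (norm_nonneg _) (by simpa [Real.norm_eq_abs] using him')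
end eBound

section opBounds
variable {V : Type*} [NormedAddCommGroup V] [NormedSpace ℝ V] [FiniteDimensional ℝ V]

lemma e_bound_op (e : V ≃ₗ[ℝ] V)
    (hss : Module.End.IsSemisimple (LinearMap.baseChange ℂ (e : V →ₗ[ℝ] V)))
    (hsp : ∀ μ ∈ spectrum ℂ (LinearMap.baseChange ℂ (e : V →ₗ[ℝ] V)), ‖μ‖ = 1) :
    ∃ C : ℝ, 0 ≤ C ∧ ∀ (t : ℤ) (y : V), ‖((e ^ t : V ≃ₗ[ℝ] V)) y‖ ≤ C * ‖y‖ := by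
  classical
  set b := Module.finBasis ℝ V with hb
  have hvec : ∀ j, ∃ C, ∀ t : ℤ, ‖((e ^ t : V ≃ₗ[ℝ] V)) (b j)‖ ≤ C :=
    fun j => e_bound_vec e hss hsp (b j)
  choose Cf hCf using hvec
  set L : Fin (Module.finrank ℝ V) → (V →L[ℝ] ℝ) :=
    fun j => LinearMap.toContinuousLinearMap (b.coord j) with hL
  refine ⟨∑ j, ‖L j‖ * max (Cf j) 0, Finset.sum_nonneg fun j _ =>
    mul_nonneg (norm_nonneg _) (le_max_right _ _), fun t y => ?_⟩
  have hy : y = ∑ j, b.repr y j • b j := (b.sum_repr y).symm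
  calc ‖((e ^ t : V ≃ₗ[ℝ] V)) y‖
      = ‖∑ j, b.repr y j • ((e ^ t : V ≃ₗ[ℝ] V)) (b j)‖ := by
        conv_lhs => rw [hy]
        rw [map_sum]
        simp_rw [map_smul]
    _ ≤ ∑ j, ‖b.repr y j • ((e ^ t : V ≃ₗ[ℝ] V)) (b j)‖ := norm_sum_le _ _
    _ ≤ ∑ j, (‖L j‖ * ‖y‖) * max (Cf j) 0 := by
        refine Finset.sum_le_sum fun j _ => ?_
        rw [norm_smul]
        refine mul_le_mul ?_ ((hCf j t).trans (le_max_left _ _)) (norm_nonneg _)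
          (mul_nonneg (norm_nonneg _) (norm_nonneg _))
        have : b.repr y j = L j y := rfl
        rw [this]
        exact (L j).le_opNorm y
    _ = (∑ j, ‖L j‖ * max (Cf j) 0) * ‖y‖ := by
        rw [Finset.sum_mul]
        congr 1
        ext j
        ring

lemma unip_bound (u : V ≃ₗ[ℝ] V) (hun : IsNilpotent ((u : V →ₗ[ℝ] V) - 1)) :
    ∃ (C : ℝ) (d : ℕ), 0 ≤ C ∧ ∀ (t : ℕ) (y : V),
      ‖((u ^ t : V ≃ₗ[ℝ] V)) y‖ ≤ C * ((t : ℝ) + 1) ^ d * ‖y‖ := by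
  classical
  obtain ⟨d, hd⟩ := hun
  set N : V →ₗ[ℝ] V := (u : V →ₗ[ℝ] V) - 1 with hN
  set Kf : ℕ → ℝ := fun j => ‖LinearMap.toContinuousLinearMap (N ^ j)‖ with hKf
  refine ⟨∑ j ∈ Finset.range d, Kf j, d, Finset.sum_nonneg fun j _ => norm_nonneg _,
    fun t y => ?_⟩
  -- coercion of power
  have hcoe : ((u ^ t : V ≃ₗ[ℝ] V)) y = (((u : V →ₗ[ℝ] V)) ^ t) y := by
    rw [LinearEquiv.pow_apply, Module.End.pow_apply]
    rfl
  have hbin : ((u : V →ₗ[ℝ] V)) ^ t = ∑ j ∈ Finset.range (t + 1),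
      N ^ j * (t.choose j : V →ₗ[ℝ] V) := by
    have : (u : V →ₗ[ℝ] V) = N + 1 := by rw [hN]; abel
    rw [this]
    rw [Commute.add_pow (Commute.one_right N)]
    exact Finset.sum_congr rfl fun j hj => by rw [one_pow, mul_one]
  rw [hcoe, hbin]
  have happ : (∑ j ∈ Finset.range (t + 1), N ^ j * (t.choose j : V →ₗ[ℝ] V)) y
      = ∑ j ∈ Finset.range (t + 1), (t.choose j : ℝ) • (N ^ j) y := by
    rw [LinearMap.sum_apply]
    refine Finset.sum_congr rfl fun j hj => ?_
    rw [Module.End.mul_apply, Module.End.natCast_apply, map_nsmul]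
    rw [← Nat.cast_smul_eq_nsmul ℝ]
  rw [happ]
  have hterm : ∀ j ∈ Finset.range (t + 1),
      ‖(t.choose j : ℝ) • (N ^ j) y‖ ≤ ((t : ℝ) + 1) ^ d *
        (if j < d then Kf j * ‖y‖ else 0) := by
    intro j hj
    by_cases hjd : j < d
    · simp only [hjd, if_true]
      rw [norm_smul, Real.norm_natCast]
      have h1 : (t.choose j : ℝ) ≤ ((t : ℝ) + 1) ^ d := by
        have : t.choose j ≤ (t + 1) ^ d :=
          (Nat.choose_le_pow t j).trans
            ((Nat.pow_le_pow_left (Nat.le_succ t) j).trans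
              (Nat.pow_le_pow_right (Nat.succ_pos t) hjd.le))
        exact_mod_cast this
      have h2 : ‖(N ^ j) y‖ ≤ Kf j * ‖y‖ := by
        have : (N ^ j) y = LinearMap.toContinuousLinearMap (N ^ j) y := rfl
        rw [this]
        exact (LinearMap.toContinuousLinearMap (N ^ j)).le_opNorm y
      calc (t.choose j : ℝ) * ‖(N ^ j) y‖ ≤ ((t : ℝ) + 1) ^ d * (Kf j * ‖y‖) :=
        mul_le_mul h1 h2 (norm_nonneg _) (by positivity)
      _ = ((t : ℝ) + 1) ^ d * (Kf j * ‖y‖) := rfl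
    · simp only [hjd, if_false]
      have : N ^ j = 0 := by
        have hsplit : N ^ j = N ^ d * N ^ (j - d) := by
          rw [← pow_add, Nat.add_sub_cancel' (Nat.le_of_not_lt hjd)]
        rw [hsplit, hd, zero_mul]
      rw [this]
      simp
  calc ‖∑ j ∈ Finset.range (t + 1), (t.choose j : ℝ) • (N ^ j) y‖
      ≤ ∑ j ∈ Finset.range (t + 1), ‖(t.choose j : ℝ) • (N ^ j) y‖ := norm_sum_le _ _
    _ ≤ ∑ j ∈ Finset.range (t + 1), ((t : ℝ) + 1) ^ d * (if j < d then Kf j * ‖y‖ else 0) :=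
        Finset.sum_le_sum hterm
    _ = ((t : ℝ) + 1) ^ d * ∑ j ∈ Finset.range (t + 1), (if j < d then Kf j * ‖y‖ else 0) := by
        rw [Finset.mul_sum]
    _ ≤ ((t : ℝ) + 1) ^ d * ∑ j ∈ Finset.range d, Kf j * ‖y‖ := by
        refine mul_le_mul_of_nonneg_left ?_ (by positivity)
        rw [← Finset.sum_filter]
        refine Finset.sum_le_sum_of_subset_of_nonneg ?_ fun j _ _ => by positivity
        intro j hj
        rw [Finset.mem_filter] at hj
        exact Finset.mem_range.2 hj.2
    _ = (∑ j ∈ Finset.range d, Kf j) * ((t : ℝ) + 1) ^ d * ‖y‖ := by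
        rw [← Finset.sum_mul]
        ring
end opBounds

end Helpers

set_option maxHeartbeats 1000000 in
/-- Let `g = e h u` be the multiplicative Jordan decomposition of
`g ∈ GL(V)`, and `V = V_{λ₁} ⊕ ⋯ ⊕ V_{λ_n}` the eigenspace decomposition of the hyperbolic
part `h`, with `λ₁ > ⋯ > λ_n > 0`.  Write `v = v₁ + ⋯ + v_n` with `v_k ∈ V_{λ_k}`, `v ≠ 0`,
and let `i` be the smallest index with `v_i ≠ 0`.  Then every limit of a subsequence
`g^{t_j}[v]` in `ℙ(V)` with `t_j → ∞` lies in `ℙ(V_{λ_i})`; i.e. `ω([v]) ⊆ ℙ(V_{λ_i})`. -/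
theorem omega_limit_in_top_eigenspace
    {V : Type*} [NormedAddCommGroup V] [NormedSpace ℝ V] [FiniteDimensional ℝ V]
    (g e h u : V ≃ₗ[ℝ] V) (hg : g = e * h * u)
    (heh : Commute (e : V →ₗ[ℝ] V) (h : V →ₗ[ℝ] V))
    (heu : Commute (e : V →ₗ[ℝ] V) (u : V →ₗ[ℝ] V))
    (hhu : Commute (h : V →ₗ[ℝ] V) (u : V →ₗ[ℝ] V))
    (he : Module.End.IsSemisimple (LinearMap.baseChange ℂ (e : V →ₗ[ℝ] V)) ∧
      ∀ μ ∈ spectrum ℂ (LinearMap.baseChange ℂ (e : V →ₗ[ℝ] V)), ‖μ‖ = 1)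
    (hu : IsNilpotent ((u : V →ₗ[ℝ] V) - 1))
    (n : ℕ) (l : Fin n → ℝ) (hl : StrictAnti l) (hlpos : ∀ k, 0 < l k)
    (hdiag : ⨆ k : Fin n, Module.End.eigenspace (h : V →ₗ[ℝ] V) (l k) = ⊤)
    (v : Fin n → V) (hv : ∀ k, v k ∈ Module.End.eigenspace (h : V →ₗ[ℝ] V) (l k))
    (hsum : ∑ k, v k ≠ 0) (i : Fin n) (hvi : v i ≠ 0) (hmin : ∀ k < i, v k = 0) :
    ∀ ts : ℕ → ℤ, Tendsto ts atTop atTop →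
      ∀ (x : V) (hx : x ≠ 0),
        Tendsto (fun j => projFlow g (ts j) (Projectivization.mk ℝ (∑ k, v k) hsum))
          atTop (𝓝 (Projectivization.mk ℝ x hx)) →
        x ∈ Module.End.eigenspace (h : V →ₗ[ℝ] V) (l i) := by
  classical
  intro ts hts x hx hlim
  -- subspaces
  set hE : V →ₗ[ℝ] V := (h : V →ₗ[ℝ] V) with hhE
  set W : Submodule ℝ V := Module.End.eigenspace hE (l i) with hW
  set Uc : Submodule ℝ V := ⨆ μ, ⨆ (_ : μ ≠ l i), Module.End.eigenspace hE μ with hUc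
  have hWU : IsCompl W Uc := by
    constructor
    · exact (Module.End.eigenspaces_iSupIndep hE) (l i)
    · rw [codisjoint_iff_le_sup]
      rw [← hdiag]
      refine iSup_le fun k => ?_
      by_cases hk : k = i
      · subst hk; exact le_sup_of_le_left le_rfl
      · refine le_sup_of_le_right ?_
        have : l k ≠ l i := hl.injective.ne hk
        exact le_iSup_of_le (l k) (le_iSup_of_le this le_rfl)
  set πU : V →ₗ[ℝ] Uc := Submodule.linearProjOfIsCompl Uc W hWU.symm with hπU
  set πW : V →ₗ[ℝ] W := Submodule.linearProjOfIsCompl W Uc hWU with hπW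
  set PW : V →L[ℝ] V := LinearMap.toContinuousLinearMap (W.subtype.comp πW) with hPW
  -- the continuous function on projective space
  set Q : { w : V // w ≠ 0 } → ℝ := fun w => ‖(πU w.1 : V)‖ / ‖w.1‖ with hQ
  have hresp : ∀ a b : { w : V // w ≠ 0 },
      (projectivizationSetoid ℝ V).r a b → Q a = Q b := by
    rintro ⟨a, ha⟩ ⟨b, hb⟩ hab
    obtain ⟨c, hc⟩ := hab
    simp only [hQ]
    dsimp only at hc ⊢
    rw [← hc]
    have hc1 : (c : ℝˣ) • b = (c : ℝ) • b := rfl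
    rw [hc1, map_smul, norm_smul, Submodule.coe_smul, norm_smul]
    rw [mul_div_mul_left _ _ (by simp [Units.ne_zero c] : ‖(c : ℝ)‖ ≠ 0)]
  set q : ℙ ℝ V → ℝ := Quotient.lift Q hresp with hq
  have hqcont : Continuous q := by
    refine Continuous.quotient_lift ?_ hresp
    have h1 : Continuous fun w : { w : V // w ≠ 0 } => ‖(πU w.1 : V)‖ :=
      (continuous_subtype_val.comp
        ((LinearMap.continuous_of_finiteDimensional πU).comp continuous_subtype_val)).norm
    have h2 : Continuous fun w : { w : V // w ≠ 0 } => ‖w.1‖ := continuous_subtype_val.norm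
    exact h1.div h2 fun w => by simpa using w.2
  -- commuting equivalences
  have coe_mul : ∀ a b : V ≃ₗ[ℝ] V, ((a * b : V ≃ₗ[ℝ] V) : V →ₗ[ℝ] V)
      = (a : V →ₗ[ℝ] V) * (b : V →ₗ[ℝ] V) := fun a b => rfl
  have commEquiv : ∀ a b : V ≃ₗ[ℝ] V,
      Commute (a : V →ₗ[ℝ] V) (b : V →ₗ[ℝ] V) → Commute a b := by
    intro a b hab
    have : ((a * b : V ≃ₗ[ℝ] V) : V →ₗ[ℝ] V) = ((b * a : V ≃ₗ[ℝ] V) : V →ₗ[ℝ] V) := by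
      rw [coe_mul, coe_mul]; exact hab.eq
    exact LinearEquiv.toLinearMap_injective this
  have ceh : Commute e h := commEquiv _ _ heh
  have ceu : Commute e u := commEquiv _ _ heu
  have chu : Commute h u := commEquiv _ _ hhu
  set m : V ≃ₗ[ℝ] V := e * u with hm
  have hgm : g = m * h := by
    rw [hg, hm, mul_assoc, chu.eq, ← mul_assoc]
  have cmh : Commute m h := (ceh.mul_left chu.symm)
  have cmhE : Commute (m : V →ₗ[ℝ] V) hE := by
    have : ((m * h : V ≃ₗ[ℝ] V) : V →ₗ[ℝ] V) = ((h * m : V ≃ₗ[ℝ] V) : V →ₗ[ℝ] V) := by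
      rw [cmh.eq]
    rw [coe_mul, coe_mul] at this
    exact this
  -- eigen decomposition of g^s
  have hv' : ∀ k, h (v k) = l k • v k := fun k => Module.End.mem_eigenspace_iff.1 (hv k)
  have hdecomp : ∀ (s : ℕ) (k : Fin n), (g ^ s) (v k) = (l k) ^ s • (m ^ s) (v k) := by
    intro s k
    rw [hgm, cmh.mul_pow, lequiv_mul_apply', eqPow_apply_smul h (hv' k) s, map_smul]
  -- m^s preserves eigenspaces
  have hminv : ∀ (μ : ℝ) (s : ℕ) (y : V), y ∈ Module.End.eigenspace hE μ →
      (m ^ s) y ∈ Module.End.eigenspace hE μ := by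
    intro μ s y hy
    exact equivPow_mem m _ (comm_maps_eigenspace m h cmhE μ).1 s y hy
  -- bounds
  obtain ⟨hss, hsp⟩ := he
  obtain ⟨Ce, hCe0, hCe⟩ := e_bound_op e hss hsp
  obtain ⟨Cu, du, hCu0, hCu⟩ := unip_bound u hu
  have huinv : IsNilpotent (((u⁻¹ : V ≃ₗ[ℝ] V) : V →ₗ[ℝ] V) - 1) := by
    set A : V →ₗ[ℝ] V := ((u⁻¹ : V ≃ₗ[ℝ] V) : V →ₗ[ℝ] V) with hA
    have hAu : A * (u : V →ₗ[ℝ] V) = 1 := by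
      ext y; exact u.symm_apply_apply y
    have huA : (u : V →ₗ[ℝ] V) * A = 1 := by
      ext y; exact u.apply_symm_apply y
    have hcomm : Commute A (-((u : V →ₗ[ℝ] V) - 1)) := by
      have : Commute A (u : V →ₗ[ℝ] V) := by
        unfold Commute SemiconjBy
        rw [hAu, huA]
      exact ((this.sub_right (Commute.one_right A)).neg_right)
    have heq : A - 1 = A * (-((u : V →ₗ[ℝ] V) - 1)) := by
      rw [mul_neg, mul_sub, hAu, mul_one, neg_sub]
    rw [heq]
    exact hcomm.isNilpotent_mul_left hu.neg
  obtain ⟨Cv, dv, hCv0, hCv⟩ := unip_bound u⁻¹ huinv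
  set D := du + dv with hD
  -- zpow of e bound, nat pow versions
  have hCeN : ∀ (s : ℕ) (y : V), ‖(e ^ s) y‖ ≤ Ce * ‖y‖ := by
    intro s y
    have := hCe (s : ℤ) y
    rwa [zpow_natCast] at this
  have hCeInv : ∀ (s : ℕ) (y : V), ‖(e ^ s).symm y‖ ≤ Ce * ‖y‖ := by
    intro s y
    have := hCe (-(s : ℤ)) y
    rwa [zpow_neg, zpow_natCast, lequiv_inv_eq_symm] at this
  -- upper bound for m^s
  have hupper : ∀ (s : ℕ) (y : V), ‖(m ^ s) y‖ ≤ Ce * (Cu * ((s : ℝ) + 1) ^ du * ‖y‖) := by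
    intro s y
    have h1 : (m ^ s) y = (e ^ s) ((u ^ s) y) := by
      rw [hm, ceu.mul_pow, lequiv_mul_apply']
    rw [h1]
    exact (hCeN s _).trans (mul_le_mul_of_nonneg_left (hCu s y) hCe0)
  -- lower bound for m^s at v i
  have hlower : ∀ s : ℕ, ‖v i‖ ≤ Cv * ((s : ℝ) + 1) ^ dv * (Ce * ‖(m ^ s) (v i)‖) := by
    intro s
    have h1 : (m ^ s) (v i) = (e ^ s) ((u ^ s) (v i)) := by
      rw [hm, ceu.mul_pow, lequiv_mul_apply']
    have h2 : (u ^ s) (v i) = (e ^ s).symm ((m ^ s) (v i)) := by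
      rw [h1, LinearEquiv.symm_apply_apply]
    have h3 : v i = ((u⁻¹ : V ≃ₗ[ℝ] V) ^ s) ((e ^ s).symm ((m ^ s) (v i))) := by
      rw [← h2, inv_pow, lequiv_inv_eq_symm, LinearEquiv.symm_apply_apply]
    calc ‖v i‖ = ‖((u⁻¹ : V ≃ₗ[ℝ] V) ^ s) ((e ^ s).symm ((m ^ s) (v i)))‖ := by rw [← h3]
      _ ≤ Cv * ((s : ℝ) + 1) ^ dv * ‖(e ^ s).symm ((m ^ s) (v i))‖ := hCv s _
      _ ≤ Cv * ((s : ℝ) + 1) ^ dv * (Ce * ‖(m ^ s) (v i)‖) := by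
          refine mul_le_mul_of_nonneg_left (hCeInv s _) ?_
          positivity
  -- constants
  set vv : V := ∑ k, v k with hvv
  have hvinorm : (0 : ℝ) < ‖v i‖ := norm_pos_iff.2 hvi
  set KW : ℝ := ‖PW‖ with hKW
  have hKW0 : 0 ≤ KW := norm_nonneg _
  set ρ : Fin n → ℝ := fun k => l k / l i with hρ
  set B : Fin n → ℝ := fun k => Ce * Ce * Cu * Cv * ‖v k‖ / ‖v i‖ with hB
  have hB0 : ∀ k, 0 ≤ B k := fun k => by
    rw [hB]; positivity
  set G : ℕ → ℝ := fun s =>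
    ∑ k ∈ Finset.univ.erase i, (KW * B k) * ((s : ℝ) + 1) ^ D * ρ k ^ s with hG
  -- membership facts
  have hmemU : ∀ (k : Fin n), k ≠ i → ∀ s : ℕ, (m ^ s) (v k) ∈ Uc := by
    intro k hk s
    have h1 : (m ^ s) (v k) ∈ Module.End.eigenspace hE (l k) := hminv (l k) s (v k) (hv k)
    have h2 : Module.End.eigenspace hE (l k) ≤ Uc :=
      le_iSup_of_le (l k) (le_iSup_of_le (hl.injective.ne hk) le_rfl)
    exact h2 h1
  have hmemW : ∀ s : ℕ, (m ^ s) (v i) ∈ W := fun s => hminv (l i) s (v i) (hv i)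
  -- decomposition of (g ^ s) vv
  have hgv : ∀ s : ℕ, (g ^ s) vv = ∑ k, (l k) ^ s • (m ^ s) (v k) := by
    intro s
    rw [hvv, map_sum]
    exact Finset.sum_congr rfl fun k _ => hdecomp s k
  -- numerator estimate
  have num_le : ∀ s : ℕ, ‖(πU ((g ^ s) vv) : V)‖ ≤
      ∑ k ∈ Finset.univ.erase i, (l k) ^ s * ‖(m ^ s) (v k)‖ := by
    intro s
    have hzeroi : (l i) ^ s • πU ((m ^ s) (v i)) = 0 := by
      rw [show πU ((m ^ s) (v i)) = 0 from
        Submodule.projectionOnto_apply_of_mem_right hWU.symm (hmemW s), smul_zero]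
    have num_eq : πU ((g ^ s) vv) = ∑ k ∈ Finset.univ.erase i,
        (l k) ^ s • πU ((m ^ s) (v k)) := by
      rw [hgv s, map_sum]
      simp_rw [map_smul]
      exact (Finset.sum_erase (f := fun k => (l k) ^ s • πU ((m ^ s) (v k))) Finset.univ hzeroi).symm
    rw [num_eq]
    calc ‖((∑ k ∈ Finset.univ.erase i, (l k) ^ s • πU ((m ^ s) (v k)) : Uc) : V)‖
        = ‖∑ k ∈ Finset.univ.erase i, (l k) ^ s • (πU ((m ^ s) (v k)) : V)‖ := by
          norm_cast
      _ ≤ ∑ k ∈ Finset.univ.erase i, ‖(l k) ^ s • (πU ((m ^ s) (v k)) : V)‖ :=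
          norm_sum_le _ _
      _ ≤ ∑ k ∈ Finset.univ.erase i, (l k) ^ s * ‖(m ^ s) (v k)‖ := by
          refine Finset.sum_le_sum fun k hk => ?_
          have hk' : k ≠ i := Finset.ne_of_mem_erase hk
          have : πU ((m ^ s) (v k)) = ⟨(m ^ s) (v k), hmemU k hk' s⟩ := by
            exact Submodule.linearProjOfIsCompl_apply_left hWU.symm ⟨_, hmemU k hk' s⟩
          rw [this, norm_smul, Real.norm_eq_abs, abs_of_nonneg (pow_nonneg (hlpos k).le s)]
  -- denominator estimate
  have den_ge : ∀ s : ℕ, (l i) ^ s * ‖(m ^ s) (v i)‖ ≤ KW * ‖(g ^ s) vv‖ := by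
    intro s
    have den_eq : ((πW ((g ^ s) vv)) : V) = (l i) ^ s • (m ^ s) (v i) := by
      rw [hgv s, map_sum]
      simp_rw [map_smul]
      have hsingle : ∑ k, (l k) ^ s • πW ((m ^ s) (v k)) =
          (l i) ^ s • πW ((m ^ s) (v i)) := by
        refine Finset.sum_eq_single_of_mem i (Finset.mem_univ i) fun k _ hk => ?_
        rw [show πW ((m ^ s) (v k)) = 0 from
          Submodule.projectionOnto_apply_of_mem_right hWU (hmemU k hk s), smul_zero]
      rw [hsingle]
      have : πW ((m ^ s) (v i)) = ⟨(m ^ s) (v i), hmemW s⟩ :=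
        Submodule.linearProjOfIsCompl_apply_left hWU ⟨_, hmemW s⟩
      rw [this]
      rfl
    have h1 : ‖((πW ((g ^ s) vv)) : V)‖ = (l i) ^ s * ‖(m ^ s) (v i)‖ := by
      rw [den_eq, norm_smul, Real.norm_eq_abs, abs_of_nonneg (pow_nonneg (hlpos i).le s)]
    have h2 : ‖((πW ((g ^ s) vv)) : V)‖ ≤ KW * ‖(g ^ s) vv‖ := by
      have : ((πW ((g ^ s) vv)) : V) = PW ((g ^ s) vv) := rfl
      rw [this, hKW]
      exact PW.le_opNorm _
    linarith [h1 ▸ h2]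
  -- per-index estimate
  have per_k : ∀ s : ℕ, ∀ k ∈ Finset.univ.erase i,
      (l k) ^ s * ‖(m ^ s) (v k)‖ ≤
        B k * ((s : ℝ) + 1) ^ D * ρ k ^ s * ((l i) ^ s * ‖(m ^ s) (v i)‖) := by
    intro s k hk
    have h1 := hupper s (v k)
    have h2 := hlower s
    have hlk : (0 : ℝ) < l k := hlpos k
    have hli : (0 : ℝ) < l i := hlpos i
    have hrw : ρ k ^ s * (l i) ^ s = (l k) ^ s := by
      rw [hρ]
      rw [div_pow, div_mul_cancel₀]
      positivity
    have h3 : ‖(m ^ s) (v k)‖ * ‖v i‖ ≤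
        (Ce * (Cu * ((s : ℝ) + 1) ^ du * ‖v k‖)) *
          (Cv * ((s : ℝ) + 1) ^ dv * (Ce * ‖(m ^ s) (v i)‖)) := by
      refine mul_le_mul h1 h2 (le_of_lt hvinorm) ?_
      positivity
    have h4 : ‖(m ^ s) (v k)‖ ≤
        (B k * ((s : ℝ) + 1) ^ D) * ‖(m ^ s) (v i)‖ := by
      rw [hB, div_mul_eq_mul_div, div_mul_eq_mul_div, le_div_iff₀ hvinorm]
      refine h3.trans (le_of_eq ?_)
      rw [hD, pow_add]
      ring
    calc (l k) ^ s * ‖(m ^ s) (v k)‖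
        ≤ (l k) ^ s * ((B k * ((s : ℝ) + 1) ^ D) * ‖(m ^ s) (v i)‖) :=
          mul_le_mul_of_nonneg_left h4 (by positivity)
      _ = B k * ((s : ℝ) + 1) ^ D * ρ k ^ s * ((l i) ^ s * ‖(m ^ s) (v i)‖) := by
          rw [← hrw]
          ring
  -- key inequality
  have hgvne : ∀ s : ℕ, (g ^ s) vv ≠ 0 := fun s hz => hsum ((g ^ s).map_eq_zero_iff.1 hz)
  have key : ∀ s : ℕ, ‖(πU ((g ^ s) vv) : V)‖ / ‖(g ^ s) vv‖ ≤ G s := by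
    intro s
    rw [div_le_iff₀ (norm_pos_iff.2 (hgvne s))]
    calc ‖(πU ((g ^ s) vv) : V)‖
        ≤ ∑ k ∈ Finset.univ.erase i, (l k) ^ s * ‖(m ^ s) (v k)‖ := num_le s
      _ ≤ ∑ k ∈ Finset.univ.erase i,
            B k * ((s : ℝ) + 1) ^ D * ρ k ^ s * ((l i) ^ s * ‖(m ^ s) (v i)‖) :=
          Finset.sum_le_sum (per_k s)
      _ ≤ ∑ k ∈ Finset.univ.erase i,
            B k * ((s : ℝ) + 1) ^ D * ρ k ^ s * (KW * ‖(g ^ s) vv‖) := by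
          refine Finset.sum_le_sum fun k hk => ?_
          refine mul_le_mul_of_nonneg_left (den_ge s) ?_
          have hρge : (0 : ℝ) ≤ ρ k := by
            rw [hρ]
            exact div_nonneg (hlpos k).le (hlpos i).le
          exact mul_nonneg (mul_nonneg (hB0 k) (by positivity)) (pow_nonneg hρge s)
      _ = G s * ‖(g ^ s) vv‖ := by
          rw [hG, Finset.sum_mul]
          refine Finset.sum_congr rfl fun k hk => ?_
          ring
  -- G tends to zero
  have hGzero : Tendsto G atTop (𝓝 0) := by
    rw [hG]
    have : Tendsto (fun s : ℕ => ∑ k ∈ Finset.univ.erase i,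
        (KW * B k) * ((s : ℝ) + 1) ^ D * ρ k ^ s) atTop (𝓝 (∑ k ∈ Finset.univ.erase i, 0)) := by
      refine tendsto_finset_sum _ fun k hk => ?_
      by_cases hvk : v k = 0
      · have : ∀ s : ℕ, (KW * B k) * ((s : ℝ) + 1) ^ D * ρ k ^ s = 0 := by
          intro s
          rw [hB]
          simp [hvk]
        simp_rw [this]
        exact tendsto_const_nhds
      · -- then k > i, so ρ k < 1
        have hki : i < k := by
          rcases lt_trichotomy k i with hlt | heq | hgt
          · exact absurd (hmin k hlt) hvk
          · exact absurd heq (Finset.ne_of_mem_erase hk)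
          · exact hgt
        have hρk0 : 0 < ρ k := by
          rw [hρ]; exact div_pos (hlpos k) (hlpos i)
        have hρk1 : ρ k < 1 := by
          rw [hρ, div_lt_one (hlpos i)]
          exact hl hki
        have habs : |ρ k| < 1 := by
          rw [abs_of_pos hρk0]; exact hρk1
        have h1 : Tendsto (fun s : ℕ => (s : ℝ) ^ D * ρ k ^ s) atTop (𝓝 0) :=
          tendsto_pow_const_mul_const_pow_of_abs_lt_one D habs
        have h2 : Tendsto (fun s : ℕ => ((s + 1 : ℕ) : ℝ) ^ D * ρ k ^ (s + 1)) atTop (𝓝 0) :=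
          h1.comp (tendsto_add_atTop_nat 1)
        have h3 : Tendsto (fun s : ℕ => (KW * B k / ρ k) *
            (((s + 1 : ℕ) : ℝ) ^ D * ρ k ^ (s + 1))) atTop (𝓝 ((KW * B k / ρ k) * 0)) :=
          h2.const_mul _
        rw [mul_zero] at h3
        refine h3.congr fun s => ?_
        rw [pow_succ]
        push_cast
        field_simp
    simpa using this
  -- convergence of q along the sequence
  have htoNat : Tendsto (fun j => (ts j).toNat) atTop atTop := by
    rw [tendsto_atTop]
    intro b
    filter_upwards [hts.eventually (eventually_ge_atTop (b : ℤ))] with j hj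
    omega
  have hGcomp : Tendsto (fun j => G ((ts j).toNat)) atTop (𝓝 0) := hGzero.comp htoNat
  have hqseq : ∀ j, q (projFlow g (ts j) (Projectivization.mk ℝ vv hsum)) =
      ‖(πU ((g ^ (ts j)) vv) : V)‖ / ‖(g ^ (ts j)) vv‖ := by
    intro j
    rw [projFlow, Projectivization.map_mk]
    rfl
  have hconv : Tendsto (fun j => ‖(πU ((g ^ (ts j)) vv) : V)‖ / ‖(g ^ (ts j)) vv‖)
      atTop (𝓝 (q (Projectivization.mk ℝ x hx))) := by
    have := (hqcont.tendsto (Projectivization.mk ℝ x hx)).comp hlim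
    refine this.congr fun j => hqseq j
  have hzero : Tendsto (fun j => ‖(πU ((g ^ (ts j)) vv) : V)‖ / ‖(g ^ (ts j)) vv‖)
      atTop (𝓝 0) := by
    refine squeeze_zero' ?_ ?_ hGcomp
    · filter_upwards with j
      positivity
    · filter_upwards [hts.eventually (eventually_ge_atTop (0 : ℤ))] with j hj
      have : (g ^ (ts j)) = g ^ ((ts j).toNat) := by
        rw [← zpow_natCast, Int.toNat_of_nonneg hj]
      rw [this]
      exact key _
  have hq0 : q (Projectivization.mk ℝ x hx) = 0 := tendsto_nhds_unique hconv hzero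
  have hqx : ‖(πU x : V)‖ / ‖x‖ = 0 := hq0
  have hπUx : πU x = 0 := by
    rcases div_eq_zero_iff.1 hqx with h1 | h1
    · exact Subtype.ext (by simpa using norm_eq_zero.1 h1)
    · exact absurd (norm_eq_zero.1 h1) hx
  have : x ∈ W := by
    have := Submodule.linearProjOfIsCompl_ker hWU.symm
    rw [← this]
    exact LinearMap.mem_ker.2 hπUx
  exact this
end
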